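/- arXiv:2111.01197 — 3 statements merged into one kernel-verified Lean document; each statement's English description precedes it below -/
import Mathlib

section
/- Let α ∈ (0,1). The function Φ satisfies Φ(0) = 1 and the fractional ordinary differential equation D^α Φ(y) + (1/(1+α)) · y · Φ(y) = 0 for every y > 0, where D^α is the Caputo fractional derivative. -/
open MeasureTheory Real Set

/-- Caputo fractional derivative of order `α` on the half-line:
`D^α u(x) = (1/Γ(1−α)) ∫₀ˣ u'(s)(x−s)^{−α} ds`. -/
noncomputable def caputo (α : ℝ) (u : ℝ → ℝ) (x : ℝ) : ℝ :=
  (1 / Real.Gamma (1 - α)) * ∫ s in (0:ℝ)..x, deriv u s * (x - s) ^ (-α)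
/-- The function `Φ(x) = Σ (−1)ⁿ bₙ (x^{1+α}/(1+α))ⁿ`, where
`bₙ = ∏_{i<n} Γ(αi+i+2)/Γ(α(i+1)+i+2)`; it equals the generalized Mittag-Leffler
function `E_{α,1+1/α,1/α}(−x^{1+α}/(1+α))`. -/
noncomputable def PhiF (α : ℝ) (x : ℝ) : ℝ :=
  ∑' n : ℕ, (-1:ℝ)^n *
    (∏ i ∈ Finset.range n, Real.Gamma (α * i + i + 2) / Real.Gamma (α * (i+1) + i + 2)) *
    (x ^ (1+α) / (1+α)) ^ n

lemma realBeta {p q y : ℝ} (hp : 0 < p) (hq : 0 < q) (hy : 0 < y) :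
    ∫ s in (0:ℝ)..y, s ^ (p-1) * (y - s) ^ (q-1) =
      y ^ (p + q - 1) * (Real.Gamma p * Real.Gamma q / Real.Gamma (p+q)) := by
  have hC : (∫ s in (0:ℝ)..y, ((s:ℂ)) ^ ((p:ℂ)-1) * (((y:ℝ):ℂ) - s) ^ ((q:ℂ)-1))
      = ((y:ℂ)) ^ ((p:ℂ) + q - 1) * Complex.betaIntegral p q :=
    Complex.betaIntegral_scaled p q hy
  have hcong : (∫ s in (0:ℝ)..y, ((s:ℂ)) ^ ((p:ℂ)-1) * (((y:ℝ):ℂ) - s) ^ ((q:ℂ)-1))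
      = ∫ s in (0:ℝ)..y, ((s ^ (p-1) * (y - s) ^ (q-1) : ℝ) : ℂ) := by
    refine intervalIntegral.integral_congr fun s hs => ?_
    rw [uIcc_of_le hy.le] at hs
    rw [Complex.ofReal_mul, Complex.ofReal_cpow hs.1 (p-1),
      Complex.ofReal_cpow (by linarith [hs.2] : (0:ℝ) ≤ y - s) (q-1)]
    push_cast
    ring
  rw [hcong, intervalIntegral.integral_ofReal] at hC
  have hne : Complex.Gamma ((p:ℂ) + q) ≠ 0 := by
    rw [← Complex.ofReal_add, Complex.Gamma_ofReal]
    exact_mod_cast (Real.Gamma_pos_of_pos (by linarith)).ne'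
  have hbeta : Complex.betaIntegral p q
      = ((Real.Gamma p * Real.Gamma q / Real.Gamma (p+q) : ℝ) : ℂ) := by
    have h := Complex.Gamma_mul_Gamma_eq_betaIntegral (s := (p:ℂ)) (t := (q:ℂ))
      (by simpa using hp) (by simpa using hq)
    rw [Complex.ofReal_div, Complex.ofReal_mul, ← Complex.Gamma_ofReal p,
      ← Complex.Gamma_ofReal q, ← Complex.Gamma_ofReal (p+q), Complex.ofReal_add,
      eq_div_iff hne]
    linear_combination -h
  rw [hbeta, show ((p:ℂ) + q - 1) = ((p+q-1 : ℝ) : ℂ) by push_cast; ring,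
    ← Complex.ofReal_cpow hy.le, ← Complex.ofReal_mul] at hC
  exact_mod_cast hC

lemma realBeta_integrableOn {p q y : ℝ} (hp : 0 < p) (hq : 0 < q) (hy : 0 < y) :
    IntegrableOn (fun s => s ^ (p-1) * (y - s) ^ (q-1)) (Ioc 0 y) := by
  have hmeas : Measurable fun s : ℝ => s ^ (p-1) * (y - s) ^ (q-1) := by fun_prop
  have hhalf : (0:ℝ) < y/2 := half_pos hy
  have h1 : IntegrableOn (fun s : ℝ => s ^ (p-1) * (y - s) ^ (q-1)) (Ioc 0 (y/2)) := by
    set M := max (y ^ (q-1)) ((y/2) ^ (q-1)) with hM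
    have hg : IntegrableOn (fun s : ℝ => M * s ^ (p-1)) (Ioc 0 (y/2)) := by
      have := (intervalIntegral.intervalIntegrable_rpow' (a := 0) (b := y/2)
        (by linarith : (-1:ℝ) < p - 1)).const_mul M
      rwa [intervalIntegrable_iff_integrableOn_Ioc_of_le hhalf.le] at this
    refine hg.mono' hmeas.aestronglyMeasurable.restrict ?_
    filter_upwards [ae_restrict_mem measurableSet_Ioc] with s hs
    have hs0 : 0 < s := hs.1
    have hys : y/2 ≤ y - s := by linarith [hs.2]
    have hb : (y - s) ^ (q-1) ≤ M := by
      rcases le_or_gt 1 q with hq1 | hq1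
      · exact le_max_of_le_left (Real.rpow_le_rpow (by linarith) (by linarith) (by linarith))
      · exact le_max_of_le_right (Real.rpow_le_rpow_of_nonpos hhalf hys (by linarith))
    rw [Real.norm_of_nonneg (mul_nonneg (Real.rpow_nonneg hs0.le _)
      (Real.rpow_nonneg (by linarith) _))]
    calc s ^ (p-1) * (y - s) ^ (q-1) ≤ s ^ (p-1) * M :=
          mul_le_mul_of_nonneg_left hb (by positivity)
      _ = M * s ^ (p-1) := mul_comm _ _
  have h2 : IntegrableOn (fun s : ℝ => s ^ (p-1) * (y - s) ^ (q-1)) (Ioc (y/2) y) := by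
    set M := max (y ^ (p-1)) ((y/2) ^ (p-1)) with hM
    have hg : IntegrableOn (fun s : ℝ => M * (y - s) ^ (q-1)) (Ioc (y/2) y) := by
      have h0 := (intervalIntegral.intervalIntegrable_rpow' (a := 0) (b := y/2)
        (by linarith : (-1:ℝ) < q - 1)).comp_sub_left y
      have := (h0.const_mul M).symm
      rw [sub_zero] at this
      have hset : y - y/2 = y/2 := by ring
      rw [hset] at this
      rwa [intervalIntegrable_iff_integrableOn_Ioc_of_le (by linarith)] at this
    refine hg.mono' hmeas.aestronglyMeasurable.restrict ?_
    filter_upwards [ae_restrict_mem measurableSet_Ioc] with s hs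
    have hs0 : y/2 < s := hs.1
    have hb : s ^ (p-1) ≤ M := by
      rcases le_or_gt 1 p with hp1 | hp1
      · exact le_max_of_le_left (Real.rpow_le_rpow (by linarith) hs.2 (by linarith))
      · exact le_max_of_le_right (Real.rpow_le_rpow_of_nonpos hhalf hs0.le (by linarith))
    rw [Real.norm_of_nonneg (mul_nonneg (Real.rpow_nonneg (by linarith) _)
      (Real.rpow_nonneg (by linarith [hs.2]) _))]
    exact mul_le_mul_of_nonneg_right hb (Real.rpow_nonneg (by linarith [hs.2]) _)
  have := h1.union h2
  rwa [Ioc_union_Ioc_eq_Ioc hhalf.le (by linarith)] at this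


lemma Gamma_ratio_le {a z : ℝ} (ha0 : 0 < a) (ha1 : a < 1) (hz : 1 ≤ z) :
    Real.Gamma z / Real.Gamma (z + a) ≤ (z + a) ^ (1-a) / z := by
  have hz0 : 0 < z := by linarith
  have hza : 0 < z + a := by linarith
  have hGza : 0 < Real.Gamma (z + a) := Real.Gamma_pos_of_pos hza
  have hG1za : 0 < Real.Gamma (z + 1 + a) := Real.Gamma_pos_of_pos (by linarith)
  have hcvx := Real.convexOn_log_Gamma.2 (mem_Ioi.mpr hza)
    (mem_Ioi.mpr (by linarith : (0:ℝ) < z + 1 + a)) ha0.le (by linarith : 0 ≤ 1 - a) (by ring)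
  have hcomb : a • (z + a) + (1 - a) • (z + 1 + a) = z + 1 := by
    simp only [smul_eq_mul]; ring
  rw [hcomb] at hcvx
  have hG1 : Real.Gamma (z+1) ≤ Real.Gamma (z+a) ^ a * Real.Gamma (z+1+a) ^ (1-a) := by
    simp only [Function.comp_apply, smul_eq_mul] at hcvx
    have h := Real.exp_le_exp.mpr hcvx
    rwa [Real.exp_log (Real.Gamma_pos_of_pos (by linarith : (0:ℝ) < z + 1)), Real.exp_add,
      mul_comm a, mul_comm (1-a), ← Real.rpow_def_of_pos hGza,
      ← Real.rpow_def_of_pos hG1za] at h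
  have hrec : Real.Gamma (z+1+a) = (z + a) * Real.Gamma (z + a) := by
    have := Real.Gamma_add_one hza.ne'
    rw [show z + 1 + a = z + a + 1 by ring, this]
  rw [hrec, Real.mul_rpow hza.le hGza.le, Real.Gamma_add_one hz0.ne'] at hG1
  have key : z * Real.Gamma z ≤ (z+a) ^ (1-a) * Real.Gamma (z+a) := by
    calc z * Real.Gamma z ≤ Real.Gamma (z+a) ^ a * ((z+a) ^ (1-a) * Real.Gamma (z+a) ^ (1-a)) := hG1
      _ = (z+a) ^ (1-a) * (Real.Gamma (z+a) ^ a * Real.Gamma (z+a) ^ (1-a)) := by ring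
      _ = (z+a) ^ (1-a) * Real.Gamma (z+a) := by
          rw [← Real.rpow_add hGza]; norm_num
  rw [div_le_div_iff₀ hGza hz0]
  linarith [key]

lemma Gamma_ratio_le2 {a z : ℝ} (ha0 : 0 < a) (ha1 : a < 1) (hz : 2 ≤ z) :
    Real.Gamma z / Real.Gamma (z + a) ≤ 2 * z ^ (-a) := by
  have hz0 : 0 < z := by linarith
  refine (Gamma_ratio_le ha0 ha1 (by linarith)).trans ?_
  have h1 : (z + a) ^ (1-a) ≤ (2*z) ^ (1-a) :=
    Real.rpow_le_rpow (by linarith) (by linarith) (by linarith)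
  have h2 : (2*z) ^ (1-a) = 2 ^ (1-a) * z ^ (1-a) :=
    Real.mul_rpow (by norm_num) hz0.le
  have h3 : (2:ℝ) ^ (1-a) ≤ 2 := by
    calc (2:ℝ) ^ (1-a) ≤ 2 ^ (1:ℝ) :=
      Real.rpow_le_rpow_of_exponent_le one_le_two (by linarith)
    _ = 2 := Real.rpow_one 2
  have h4 : z ^ (1-a) / z = z ^ (-a) := by
    rw [eq_comm, show (-a) = 1 - a - 1 by ring, Real.rpow_sub hz0, Real.rpow_one]
  have h5 : (z + a) ^ (1-a) ≤ 2 * z ^ (1-a) := by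
    refine (h1.trans_eq h2).trans ?_
    exact mul_le_mul_of_nonneg_right h3 (Real.rpow_nonneg hz0.le _)
  calc (z+a) ^ (1-a) / z ≤ 2 * z ^ (1-a) / z := by
        exact (div_le_div_iff_of_pos_right hz0).mpr h5
    _ = 2 * (z ^ (1-a) / z) := by ring
    _ = 2 * z ^ (-a) := by rw [h4]

noncomputable def bb (α : ℝ) (n : ℕ) : ℝ :=
  ∏ i ∈ Finset.range n, Real.Gamma (α * i + i + 2) / Real.Gamma (α * (i+1) + i + 2)

lemma bb_pos {α : ℝ} (hα : 0 < α) (n : ℕ) : 0 < bb α n := by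
  refine Finset.prod_pos fun i _ => div_pos ?_ ?_ <;>
  · apply Real.Gamma_pos_of_pos; positivity

lemma bb_succ (α : ℝ) (n : ℕ) :
    bb α (n+1) = bb α n *
      (Real.Gamma ((1+α)*n + 2) / Real.Gamma (((1+α)*n + 2) + α)) := by
  rw [bb, Finset.prod_range_succ, ← bb]
  congr 2 <;> push_cast <;> ring

lemma bb_ratio_le {α : ℝ} (hα0 : 0 < α) (hα1 : α < 1) (n : ℕ) :
    bb α (n+1) ≤ bb α n * (2 * ((1+α)*n + 2) ^ (-α)) := by
  rw [bb_succ]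
  refine mul_le_mul_of_nonneg_left (Gamma_ratio_le2 hα0 hα1 ?_) (bb_pos hα0 n).le
  have : (0:ℝ) ≤ (1+α) * n := by positivity
  linarith

lemma bb_succ_le {α : ℝ} (hα0 : 0 < α) (hα1 : α < 1) (n : ℕ) :
    bb α (n+1) ≤ 2 * bb α n := by
  refine (bb_ratio_le hα0 hα1 n).trans ?_
  have hz : (1:ℝ) ≤ (1+α)*n + 2 := by
    have : (0:ℝ) ≤ (1+α) * n := by positivity
    linarith
  have h1 : ((1+α)*(n:ℝ) + 2) ^ (-α) ≤ 1 :=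
    Real.rpow_le_one_of_one_le_of_nonpos hz (by linarith)
  have hb := (bb_pos hα0 n).le
  nlinarith

lemma summable_main {α : ℝ} (hα0 : 0 < α) (hα1 : α < 1) {t : ℝ} (ht : 0 ≤ t) :
    Summable (fun n : ℕ => ((n:ℝ)+1) * bb α n * t ^ n) := by
  refine summable_of_ratio_norm_eventually_le (r := 1/2) (by norm_num) ?_
  have h0 : Filter.Tendsto (fun n : ℕ => ((n:ℝ))) Filter.atTop Filter.atTop :=
    tendsto_natCast_atTop_atTop
  have h1 : Filter.Tendsto (fun n : ℕ => (1+α)*(n:ℝ)) Filter.atTop Filter.atTop :=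
    h0.const_mul_atTop (by positivity)
  have h2 : Filter.Tendsto (fun n : ℕ => (1+α)*(n:ℝ) + 2) Filter.atTop Filter.atTop :=
    Filter.tendsto_atTop_add_const_right _ 2 h1
  have h3 : Filter.Tendsto (fun n : ℕ => ((1+α)*(n:ℝ) + 2) ^ α) Filter.atTop Filter.atTop :=
    (tendsto_rpow_atTop hα0).comp h2
  filter_upwards [h3.eventually_ge_atTop (8*t + 1)] with n hn
  set z : ℝ := (1+α)*(n:ℝ) + 2 with hzdef
  have hz0 : 0 < z := by
    have h : (0:ℝ) ≤ (1+α)*n := by positivity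
    rw [hzdef]; linarith
  have hzα : 0 < z ^ α := Real.rpow_pos_of_pos hz0 α
  have hB : z ^ (-α) ≤ (8*t+1)⁻¹ := by
    rw [Real.rpow_neg hz0.le]
    exact inv_anti₀ (by linarith) hn
  have hB0 : 0 ≤ z ^ (-α) := Real.rpow_nonneg hz0.le _
  have hb := (bb_pos hα0 n).le
  have hbs := (bb_pos hα0 (n+1)).le
  have htn : (0:ℝ) ≤ t ^ n := pow_nonneg ht n
  rw [Real.norm_of_nonneg (by positivity), Real.norm_of_nonneg (by positivity)]
  have key : ((n:ℝ)+2) * 2 * t * z ^ (-α) ≤ ((n:ℝ)+1) / 2 := by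
    have e1 : ((n:ℝ)+2) * 2 * t * z ^ (-α) ≤ ((n:ℝ)+2) * 2 * t * (8*t+1)⁻¹ :=
      mul_le_mul_of_nonneg_left hB (by positivity)
    refine e1.trans ?_
    rw [mul_inv_le_iff₀ (by positivity : (0:ℝ) < 8*t+1)]
    have hn0 : (0:ℝ) ≤ (n:ℝ) := Nat.cast_nonneg n
    nlinarith
  push_cast
  calc ((n:ℝ)+1+1) * bb α (n+1) * t ^ (n+1)
      ≤ ((n:ℝ)+1+1) * (bb α n * (2 * z ^ (-α))) * (t * t ^ n) := by
        rw [pow_succ']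
        refine mul_le_mul_of_nonneg_right ?_ (by positivity)
        exact mul_le_mul_of_nonneg_left (bb_ratio_le hα0 hα1 n) (by positivity)
    _ = (((n:ℝ)+2) * 2 * t * z ^ (-α)) * (bb α n * t ^ n) := by ring
    _ ≤ (((n:ℝ)+1) / 2) * (bb α n * t ^ n) :=
        mul_le_mul_of_nonneg_right key (by positivity)
    _ = 1/2 * (((n:ℝ)+1) * bb α n * t ^ n) := by ring

lemma summable_b {α : ℝ} (hα0 : 0 < α) (hα1 : α < 1) {t : ℝ} (ht : 0 ≤ t) :
    Summable (fun n : ℕ => bb α n * t ^ n) := by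
  refine (summable_main hα0 hα1 ht).of_nonneg_of_le (fun n => ?_) (fun n => ?_)
  · exact mul_nonneg (bb_pos hα0 n).le (pow_nonneg ht n)
  · have hb := (bb_pos hα0 n).le
    have htn : (0:ℝ) ≤ t ^ n := pow_nonneg ht n
    nlinarith [mul_nonneg (Nat.cast_nonneg (α := ℝ) n) (mul_nonneg hb htn)]

lemma PhiF_eq (α : ℝ) : PhiF α = fun x => ∑' n : ℕ, (-1:ℝ)^n * bb α n * (x ^ (1+α) / (1+α)) ^ n := rfl

lemma PhiF_apply (α x : ℝ) : PhiF α x = ∑' n : ℕ, (-1:ℝ)^n * bb α n * (x ^ (1+α) / (1+α)) ^ n := rfl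

lemma phi_hasDerivAt {α : ℝ} (hα0 : 0 < α) (hα1 : α < 1) {R x : ℝ} (hx : x ∈ Ioo 0 R) :
    HasDerivAt (PhiF α)
      (∑' n : ℕ, (-1:ℝ)^n * bb α n *
        ((n:ℝ) * (x ^ (1+α) / (1+α)) ^ (n-1) * x ^ α)) x := by
  have hc : (0:ℝ) < 1 + α := by linarith
  have hR : 0 < R := lt_trans hx.1 hx.2
  set t : ℝ := R ^ (1+α) / (1+α) with htdef
  have ht0 : 0 ≤ t := by positivity
  set u : ℕ → ℝ := fun n => bb α n * ((n:ℝ) * t ^ (n-1) * R ^ α) with hudef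
  have hu : Summable u := by
    rw [← summable_nat_add_iff 1]
    refine ((summable_main hα0 hα1 ht0).mul_left (2 * R ^ α)).of_nonneg_of_le
      (fun n => ?_) (fun n => ?_)
    · have := (bb_pos hα0 (n+1)).le
      positivity
    · have h1 : bb α (n+1) ≤ 2 * bb α n := bb_succ_le hα0 hα1 n
      have hb := (bb_pos hα0 n).le
      have htn : (0:ℝ) ≤ t ^ n := pow_nonneg ht0 n
      have hRα : (0:ℝ) ≤ R ^ α := Real.rpow_nonneg hR.le α
      simp only [hudef, Nat.add_sub_cancel]
      push_cast
      nlinarith [mul_nonneg (mul_nonneg (Nat.cast_nonneg (α := ℝ) n) htn) hRα,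
        mul_nonneg htn hRα]
  rw [PhiF_eq]
  refine hasDerivAt_tsum_of_isPreconnected (𝕜 := ℝ) (F := ℝ)
    (g := fun n x => (-1:ℝ)^n * bb α n * (x ^ (1+α) / (1+α)) ^ n)
    (g' := fun n x => (-1:ℝ)^n * bb α n * ((n:ℝ) * (x ^ (1+α) / (1+α)) ^ (n-1) * x ^ α))
    hu isOpen_Ioo
    (convex_Ioo (0:ℝ) R).isPreconnected (fun n z hz => ?_) (fun n z hz => ?_) hx ?_ hx
  · -- HasDerivAt
    have h1 : HasDerivAt (fun w : ℝ => w ^ (1+α)) ((1+α) * z ^ (1+α-1)) z :=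
      Real.hasDerivAt_rpow_const (Or.inl hz.1.ne')
    have h2 := h1.div_const (1+α)
    rw [show (1+α) * z ^ (1+α-1) / (1+α) = z ^ (1+α-1) by field_simp,
      show (1:ℝ) + α - 1 = α by ring] at h2
    exact (h2.pow n).const_mul _
  · -- bound
    have hz0 : 0 < z := hz.1
    have hz1 : (0:ℝ) ≤ z ^ (1+α) / (1+α) := by positivity
    have hzc : z ^ (1+α) / (1+α) ≤ t := by
      rw [htdef]
      gcongr
      exact hz.2.le
    have hpow : (z ^ (1+α) / (1+α)) ^ (n-1) ≤ t ^ (n-1) := pow_le_pow_left₀ hz1 hzc _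
    have hzR : z ^ α ≤ R ^ α := Real.rpow_le_rpow hz0.le hz.2.le hα0.le
    have hb := (bb_pos hα0 n).le
    have hinn : (0:ℝ) ≤ (n:ℝ) * (z ^ (1+α) / (1+α)) ^ (n-1) * z ^ α :=
      mul_nonneg (mul_nonneg (Nat.cast_nonneg n) (pow_nonneg hz1 _))
        (Real.rpow_nonneg hz0.le _)
    rw [norm_mul, norm_mul, norm_pow, norm_neg, norm_one, one_pow, one_mul,
      Real.norm_of_nonneg hb, Real.norm_of_nonneg hinn]
    refine mul_le_mul_of_nonneg_left ?_ hb
    exact mul_le_mul (mul_le_mul_of_nonneg_left hpow (Nat.cast_nonneg n)) hzR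
      (Real.rpow_nonneg hz0.le _)
      (mul_nonneg (Nat.cast_nonneg n) (pow_nonneg ht0 _))
  · -- summable at point
    have hxt : (0:ℝ) ≤ x ^ (1+α) / (1+α) :=
      div_nonneg (Real.rpow_nonneg hx.1.le _) hc.le
    refine Summable.of_norm_bounded (summable_b hα0 hα1 (t := x ^ (1+α) / (1+α)) hxt) ?_
    intro n
    have hb := (bb_pos hα0 n).le
    rw [norm_mul, norm_mul, norm_pow, norm_neg, norm_one, one_pow, one_mul,
      Real.norm_of_nonneg hb, norm_pow, Real.norm_of_nonneg hxt]

lemma beta_step {α y : ℝ} (hα0 : 0 < α) (hα1 : α < 1) (hy : 0 < y) (m : ℕ) :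
    IntegrableOn (fun s : ℝ => (s ^ (1+α) / (1+α)) ^ m * s ^ α * (y - s) ^ (-α)) (Ioc 0 y) ∧
    ∫ s in Ioc 0 y, (s ^ (1+α) / (1+α)) ^ m * s ^ α * (y - s) ^ (-α)
      = (y ^ (1+α) / (1+α)) ^ m * y *
        (Real.Gamma ((1+α)*(m+1)) * Real.Gamma (1-α) / Real.Gamma ((1+α)*m + 2)) := by
  have hc : (0:ℝ) < 1 + α := by linarith
  set p : ℝ := (1+α) * (m+1) with hpdef
  set q : ℝ := 1 - α with hqdef
  have hp : 0 < p := by positivity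
  have hq : 0 < q := by simp [hqdef]; linarith
  have heq : EqOn (fun s : ℝ => (s ^ (1+α) / (1+α)) ^ m * s ^ α * (y - s) ^ (-α))
      (fun s : ℝ => ((1+α)^m)⁻¹ * (s ^ (p-1) * (y - s) ^ (q-1))) (Ioc 0 y) := by
    intro s hs
    have hs0 : 0 < s := hs.1
    have h1 : (s ^ (1+α)) ^ m = s ^ ((1+α) * m) := by
      rw [Real.rpow_mul hs0.le, Real.rpow_natCast]
    have h2 : s ^ ((1+α) * m) * s ^ α = s ^ (p - 1) := by
      rw [← Real.rpow_add hs0]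
      congr 1
      rw [hpdef]; push_cast; ring
    have h3 : (y - s) ^ (-α) = (y - s) ^ (q - 1) := by
      congr 1
      rw [hqdef]; ring
    simp only [div_pow, h3]
    rw [div_mul_eq_mul_div, div_mul_eq_mul_div, h1, h2]
    ring
  have hInt : IntegrableOn (fun s : ℝ => ((1+α)^m)⁻¹ * (s ^ (p-1) * (y - s) ^ (q-1)))
      (Ioc 0 y) := (realBeta_integrableOn hp hq hy).const_mul _
  constructor
  · exact hInt.congr_fun (fun s hs => (heq hs).symm) measurableSet_Ioc
  · rw [setIntegral_congr_fun measurableSet_Ioc heq, MeasureTheory.integral_const_mul,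
      ← intervalIntegral.integral_of_le hy.le, realBeta hp hq hy]
    have hval : y ^ (p + q - 1) = (y ^ (1+α))^m * y := by
      have e1 : p + q - 1 = (1+α) * m + 1 := by rw [hpdef, hqdef]; push_cast; ring
      rw [e1, Real.rpow_add hy, Real.rpow_one, Real.rpow_mul hy.le, Real.rpow_natCast]
    rw [hval]
    have e2 : p + q = (1+α)*m + 2 := by rw [hpdef, hqdef]; push_cast; ring
    rw [e2, div_pow]
    ring

lemma coeff_id {α : ℝ} (hα0 : 0 < α) (hα1 : α < 1) (m : ℕ) :
    bb α (m+1) * ((m:ℝ)+1) * Real.Gamma ((1+α)*(m+1)) / Real.Gamma ((1+α)*m + 2)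
      = bb α m / (1+α) := by
  have hc : (0:ℝ) < 1 + α := by linarith
  have hcm : (0:ℝ) < (1+α) * ((m:ℝ)+1) := by positivity
  have hrec : Real.Gamma ((1+α)*(m+1) + 1) = (1+α)*((m:ℝ)+1) * Real.Gamma ((1+α)*(m+1)) := by
    push_cast
    exact Real.Gamma_add_one (by push_cast at hcm ⊢; exact hcm.ne')
  have harg : (1+α)*((m:ℝ)+1) + 1 = ((1+α)*m + 2) + α := by ring
  have hG1 : (0:ℝ) < Real.Gamma ((1+α)*m + 2) := by
    apply Real.Gamma_pos_of_pos; positivity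
  have hG2 : (0:ℝ) < Real.Gamma (((1+α)*m + 2) + α) := by
    apply Real.Gamma_pos_of_pos; positivity
  have hbs : bb α (m+1) = bb α m * (Real.Gamma ((1+α)*m + 2) / Real.Gamma (((1+α)*m + 2) + α)) :=
    bb_succ α m
  have hGm : Real.Gamma ((1+α)*(m+1)) =
      Real.Gamma (((1+α)*m + 2) + α) / ((1+α)*((m:ℝ)+1)) := by
    rw [eq_div_iff hcm.ne', ← harg]
    push_cast at hrec ⊢
    linarith [hrec]
  rw [hbs, hGm]
  field_simp

/-- `Φ(0) = 1` and `Φ` solves the fractional ODE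
`D^α Φ(y) + y Φ(y)/(1+α) = 0` for `y > 0`. -/
theorem Phi_solves_fractional_ode
    (α : ℝ) (hα : α ∈ Set.Ioo (0:ℝ) 1) :
    PhiF α 0 = 1 ∧
    ∀ y > (0:ℝ), caputo α (PhiF α) y + (1/(1+α)) * y * PhiF α y = 0 := by
  obtain ⟨hα0, hα1⟩ := hα
  have hc : (0:ℝ) < 1 + α := by linarith
  constructor
  · rw [PhiF_apply, show ((0:ℝ) ^ (1+α) / (1+α)) = 0 by rw [Real.zero_rpow hc.ne']; simp,
      tsum_eq_single 0 (fun n hn => by simp [zero_pow hn])]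
    simp [bb]
  · intro y hy
    have hΓ : (0:ℝ) < Real.Gamma (1-α) := Real.Gamma_pos_of_pos (by linarith)
    set t : ℝ := y ^ (1+α) / (1+α) with htdef
    have ht0 : 0 ≤ t := div_nonneg (Real.rpow_nonneg hy.le _) hc.le
    set F : ℕ → ℝ → ℝ := fun n s =>
      ((-1:ℝ)^n * bb α n * ((n:ℝ) * (s ^ (1+α) / (1+α)) ^ (n-1) * s ^ α)) * (y - s) ^ (-α)
      with hFdef
    have hderiv : ∀ s ∈ Ioc (0:ℝ) y, deriv (PhiF α) s
        = ∑' n : ℕ, (-1:ℝ)^n * bb α n * ((n:ℝ) * (s ^ (1+α) / (1+α)) ^ (n-1) * s ^ α) :=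
      fun s hs => (phi_hasDerivAt hα0 hα1 (R := y+1) ⟨hs.1, by linarith [hs.2]⟩).deriv
    have hEq : ∀ (m : ℕ) (s : ℝ), F (m+1) s
        = ((-1:ℝ)^(m+1) * bb α (m+1) * ((m:ℝ)+1)) *
          ((s ^ (1+α) / (1+α)) ^ m * s ^ α * (y - s) ^ (-α)) := by
      intro m s
      simp only [hFdef, Nat.add_sub_cancel]
      push_cast
      ring
    have hint : ∀ n : ℕ, IntegrableOn (F n) (Ioc 0 y) := by
      intro n
      cases n with
      | zero =>
        have h0 : F 0 = fun _ : ℝ => (0:ℝ) := funext fun s => by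
          simp [hFdef]
        rw [h0]
        exact integrableOn_zero
      | succ m =>
        have hb1 : IntegrableOn
            (fun s : ℝ => ((-1:ℝ)^(m+1) * bb α (m+1) * ((m:ℝ)+1)) *
              ((s ^ (1+α) / (1+α)) ^ m * s ^ α * (y - s) ^ (-α))) (Ioc 0 y) :=
          (beta_step hα0 hα1 hy m).1.const_mul _
        exact hb1.congr_fun (fun s _ => (hEq m s).symm) measurableSet_Ioc
    have hval : ∀ m : ℕ, ∫ s in Ioc (0:ℝ) y, F (m+1) s
        = (-1:ℝ)^(m+1) * (Real.Gamma (1-α) * (y/(1+α))) * (bb α m * t ^ m) := by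
      intro m
      have key := coeff_id hα0 hα1 m
      simp only [hEq]
      rw [MeasureTheory.integral_const_mul, (beta_step hα0 hα1 hy m).2, ← htdef]
      calc ((-1:ℝ)^(m+1) * bb α (m+1) * ((m:ℝ)+1)) *
            (t ^ m * y * (Real.Gamma ((1+α)*(m+1)) * Real.Gamma (1-α) / Real.Gamma ((1+α)*m + 2)))
          = ((-1:ℝ)^(m+1) * Real.Gamma (1-α) * y * t ^ m) *
            (bb α (m+1) * ((m:ℝ)+1) * Real.Gamma ((1+α)*(m+1)) / Real.Gamma ((1+α)*m + 2)) := by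
            ring
        _ = (-1:ℝ)^(m+1) * (Real.Gamma (1-α) * (y/(1+α))) * (bb α m * t ^ m) := by
            rw [key]; ring
    have hnorm : ∀ m : ℕ, ∫ s in Ioc (0:ℝ) y, ‖F (m+1) s‖
        = (Real.Gamma (1-α) * (y/(1+α))) * (bb α m * t ^ m) := by
      intro m
      have key := coeff_id hα0 hα1 m
      have h1 : ∀ s ∈ Ioc (0:ℝ) y, ‖F (m+1) s‖
          = (bb α (m+1) * ((m:ℝ)+1)) *
            ((s ^ (1+α) / (1+α)) ^ m * s ^ α * (y - s) ^ (-α)) := by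
        intro s hs
        have hs0 : 0 < s := hs.1
        have hg0 : (0:ℝ) ≤ (s ^ (1+α) / (1+α)) ^ m * s ^ α * (y - s) ^ (-α) :=
          mul_nonneg (mul_nonneg (pow_nonneg (div_nonneg (Real.rpow_nonneg hs0.le _) hc.le) m)
            (Real.rpow_nonneg hs0.le _)) (Real.rpow_nonneg (by linarith [hs.2]) _)
        have hb := (bb_pos hα0 (m+1)).le
        rw [hEq m s, norm_mul, norm_mul, norm_mul, norm_pow, norm_neg, norm_one, one_pow,
          one_mul, Real.norm_of_nonneg hb, Real.norm_of_nonneg (by positivity : (0:ℝ) ≤ (m:ℝ)+1),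
          Real.norm_of_nonneg hg0]
      rw [setIntegral_congr_fun measurableSet_Ioc h1, MeasureTheory.integral_const_mul,
        (beta_step hα0 hα1 hy m).2, ← htdef]
      calc (bb α (m+1) * ((m:ℝ)+1)) *
            (t ^ m * y * (Real.Gamma ((1+α)*(m+1)) * Real.Gamma (1-α) / Real.Gamma ((1+α)*m + 2)))
          = (Real.Gamma (1-α) * y * t ^ m) *
            (bb α (m+1) * ((m:ℝ)+1) * Real.Gamma ((1+α)*(m+1)) / Real.Gamma ((1+α)*m + 2)) := by
            ring
        _ = (Real.Gamma (1-α) * (y/(1+α))) * (bb α m * t ^ m) := by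
            rw [key]; ring
    have hsummN : Summable (fun n : ℕ => ∫ s in Ioc (0:ℝ) y, ‖F n s‖) := by
      rw [← summable_nat_add_iff 1]
      simp only [hnorm]
      exact (summable_b hα0 hα1 ht0).mul_left _
    have hswap := MeasureTheory.integral_tsum_of_summable_integral_norm hint hsummN
    have hsummI : Summable (fun n : ℕ => ∫ s in Ioc (0:ℝ) y, F n s) :=
      Summable.of_norm_bounded hsummN
        (fun n => MeasureTheory.norm_integral_le_integral_norm _)
    have hF0 : ∫ s in Ioc (0:ℝ) y, F 0 s = 0 := by
      have h0 : F 0 = fun _ : ℝ => (0:ℝ) := funext fun s => by simp [hFdef]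
      rw [h0]
      exact MeasureTheory.integral_zero _ _
    have hphi : PhiF α y = ∑' n : ℕ, (-1:ℝ)^n * bb α n * t ^ n := by
      rw [PhiF_apply]
    have htsum : ∑' n : ℕ, ∫ s in Ioc (0:ℝ) y, F n s
        = -(Real.Gamma (1-α) * (y/(1+α))) * PhiF α y := by
      rw [Summable.tsum_eq_zero_add hsummI, hF0, zero_add]
      have hterm : ∀ m : ℕ, ∫ s in Ioc (0:ℝ) y, F (m+1) s
          = (-(Real.Gamma (1-α) * (y/(1+α)))) * ((-1:ℝ)^m * bb α m * t ^ m) := by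
        intro m
        rw [hval m]
        ring
      simp only [hterm]
      rw [tsum_mul_left, hphi]
    have hcap : caputo α (PhiF α) y
        = (1/Real.Gamma (1-α)) * ∑' n : ℕ, ∫ s in Ioc (0:ℝ) y, F n s := by
      rw [caputo, intervalIntegral.integral_of_le hy.le, hswap]
      congr 1
      refine setIntegral_congr_fun measurableSet_Ioc (fun s hs => ?_)
      rw [hderiv s hs, ← tsum_mul_right]
    rw [hcap, htsum]
    field_simp
    ring
end

section
/- Let α ∈ (0,1). Then Φ(x) > 0 for every x ≥ 0. -/
open MeasureTheory Real Set
open Filter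
open scoped Topology

namespace PhiAux

noncomputable def bb (α : ℝ) (n : ℕ) : ℝ :=
  ∏ i ∈ Finset.range n, Real.Gamma (α * i + i + 2) / Real.Gamma (α * (i+1) + i + 2)

lemma bb_succ (α : ℝ) (n : ℕ) : bb α (n+1) =
    bb α n * (Real.Gamma (α * n + n + 2) / Real.Gamma (α * (n+1) + n + 2)) :=
  Finset.prod_range_succ _ n

lemma arg_ge_two {α : ℝ} (hα : 0 < α) (n : ℕ) : (2:ℝ) ≤ α * n + n + 2 := by
  have h1 : (0:ℝ) ≤ α * n := by positivity
  have h2 : (0:ℝ) ≤ (n:ℝ) := n.cast_nonneg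
  linarith

lemma bb_pos {α : ℝ} (hα : 0 < α) (n : ℕ) : 0 < bb α n := by
  refine Finset.prod_pos fun i _ => div_pos ?_ ?_
  · exact Real.Gamma_pos_of_pos (by have := arg_ge_two hα i; linarith)
  · refine Real.Gamma_pos_of_pos ?_
    have := arg_ge_two hα i
    have h1 : (0:ℝ) ≤ α := hα.le
    nlinarith [hα]

/-- From log-convexity: `Γ c / Γ (c+α) ≤ (c+1)^(1-α)/c` for `c ≥ 2`. -/
lemma Gamma_ratio_le {α : ℝ} (hα : 0 < α) (hα1 : α < 1) {c : ℝ} (hc : 2 ≤ c) :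
    Real.Gamma c / Real.Gamma (c + α) ≤ (c+1) ^ (1-α) / c := by
  have hc0 : (0:ℝ) < c := by linarith
  have hca : (0:ℝ) < c + α := by linarith
  have hG : 0 < Real.Gamma (c+α) := Real.Gamma_pos_of_pos hca
  have hGc : 0 < Real.Gamma c := Real.Gamma_pos_of_pos hc0
  -- convexity
  have hconv := Real.convexOn_log_Gamma.2 (mem_Ioi.2 hca) (mem_Ioi.2 (by linarith : (0:ℝ) < c + 1 + α))
      hα.le (by linarith : (0:ℝ) ≤ 1 - α) (by ring)
  have hcomb : α • (c + α) + (1 - α) • (c + 1 + α) = c + 1 := by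
    simp only [smul_eq_mul]; ring
  rw [hcomb] at hconv
  simp only [Function.comp_apply, smul_eq_mul] at hconv
  -- exponentiate
  have hG1 : 0 < Real.Gamma (c+1) := Real.Gamma_pos_of_pos (by linarith)
  have hG2 : 0 < Real.Gamma (c+1+α) := Real.Gamma_pos_of_pos (by linarith)
  have hexp : Real.Gamma (c+1) ≤ Real.Gamma (c+α) ^ α * Real.Gamma (c+1+α) ^ (1-α) := by
    have := Real.exp_le_exp.2 hconv
    rw [Real.exp_log hG1, Real.exp_add] at this
    rw [Real.rpow_def_of_pos hG, Real.rpow_def_of_pos hG2]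
    rw [mul_comm (Real.log (Real.Gamma (c+α))) α, mul_comm (Real.log (Real.Gamma (c+1+α))) (1-α)]
    exact this
  have hrec : Real.Gamma (c+1+α) = (c + α) * Real.Gamma (c+α) := by
    have : c + 1 + α = (c + α) + 1 := by ring
    rw [this, Real.Gamma_add_one (by positivity)]
  rw [hrec] at hexp
  have hmul : Real.Gamma (c+α) ^ α * ((c+α) * Real.Gamma (c+α)) ^ (1-α)
      = Real.Gamma (c+α) * (c+α) ^ (1-α) := by
    rw [Real.mul_rpow hca.le hG.le, ← mul_assoc, mul_comm (Real.Gamma (c+α) ^ α)]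
    rw [mul_assoc, ← Real.rpow_add hG]
    norm_num
    ring_nf
  rw [hmul] at hexp
  rw [Real.Gamma_add_one (ne_of_gt hc0)] at hexp
  -- now `c * Γ c ≤ Γ (c+α) * (c+α)^(1-α)` ; conclude
  rw [div_le_div_iff₀ hG hc0]
  calc Real.Gamma c * c = c * Real.Gamma c := by ring
    _ ≤ Real.Gamma (c+α) * (c+α) ^ (1-α) := hexp
    _ ≤ Real.Gamma (c+α) * (c+1) ^ (1-α) := by
        refine mul_le_mul_of_nonneg_left ?_ hG.le
        exact Real.rpow_le_rpow hca.le (by linarith) (by linarith)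
    _ = (c+1) ^ (1-α) * Real.Gamma (c+α) := by ring


lemma ratio_eventually_le {α : ℝ} (hα : 0 < α) (hα1 : α < 1) {t : ℝ} (ht : 0 ≤ t) :
    ∃ N : ℕ, ∀ n ≥ N, t * (Real.Gamma (α * n + n + 2) / Real.Gamma (α * (n+1) + n + 2)) ≤ 1/2 := by
  refine ⟨⌈(4*t+1) ^ (α⁻¹)⌉₊, fun n hn => ?_⟩
  have hc2 : (2:ℝ) ≤ α * n + n + 2 := arg_ge_two hα n
  set c : ℝ := α * n + n + 2 with hc
  have hc0 : (0:ℝ) < c := by linarith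
  have harg : α * (n+1) + n + 2 = c + α := by rw [hc]; ring
  rw [harg]
  have h1 : Real.Gamma c / Real.Gamma (c + α) ≤ (c+1) ^ (1-α) / c :=
    Gamma_ratio_le hα hα1 hc2
  have hcp1 : (0:ℝ) < c + 1 := by linarith
  have hpa : (0:ℝ) < (c+1) ^ α := Real.rpow_pos_of_pos hcp1 α
  have h2 : (c+1) ^ (1-α) / c ≤ 2 / (c+1) ^ α := by
    rw [div_le_div_iff₀ hc0 hpa]
    have he : (c+1) ^ (1-α) * (c+1) ^ α = c + 1 := by
      rw [← Real.rpow_add hcp1]; norm_num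
    rw [he]; linarith
  have hn' : ((4*t+1) ^ (α⁻¹) : ℝ) ≤ (n : ℝ) := by
    calc ((4*t+1) ^ (α⁻¹) : ℝ) ≤ (⌈(4*t+1) ^ (α⁻¹)⌉₊ : ℝ) := Nat.le_ceil _
      _ ≤ (n : ℝ) := by exact_mod_cast hn
  have hbase : (0:ℝ) ≤ 4*t+1 := by linarith
  have h4 : (4*t+1 : ℝ) ≤ (c+1) ^ α := by
    have hnc : (n:ℝ) ≤ c + 1 := by
      have hh : (0:ℝ) ≤ α * n := by positivity
      rw [hc]; linarith
    calc (4*t+1 : ℝ) = ((4*t+1) ^ (α⁻¹)) ^ α := (Real.rpow_inv_rpow hbase hα.ne').symm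
      _ ≤ (c+1) ^ α := Real.rpow_le_rpow (Real.rpow_nonneg hbase _) (hn'.trans hnc) hα.le
  calc t * (Real.Gamma c / Real.Gamma (c + α)) ≤ t * (2 / (c+1)^α) :=
        mul_le_mul_of_nonneg_left (h1.trans h2) ht
    _ ≤ 1/2 := by
        rw [mul_div_assoc', div_le_div_iff₀ hpa (by norm_num : (0:ℝ) < 2)]
        nlinarith

lemma summable_bt {α : ℝ} (hα : 0 < α) (hα1 : α < 1) {t : ℝ} (ht : 0 ≤ t) :
    Summable (fun n => bb α n * t ^ n) := by
  obtain ⟨N, hN⟩ := ratio_eventually_le hα hα1 ht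
  refine summable_of_ratio_norm_eventually_le (by norm_num : (1:ℝ)/2 < 1) ?_
  filter_upwards [eventually_ge_atTop N] with n hn
  have hb := bb_pos hα n
  have hb1 := bb_pos hα (n+1)
  have htn : (0:ℝ) ≤ t ^ n := pow_nonneg ht n
  rw [Real.norm_of_nonneg (by positivity), Real.norm_of_nonneg (by positivity)]
  rw [bb_succ, pow_succ]
  calc bb α n * (Real.Gamma (α * n + n + 2) / Real.Gamma (α * (n+1) + n + 2)) * (t ^ n * t)
      = (bb α n * t ^ n) * (t * (Real.Gamma (α * n + n + 2) / Real.Gamma (α * (n+1) + n + 2))) := by ring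
    _ ≤ (bb α n * t ^ n) * (1/2) := by
        exact mul_le_mul_of_nonneg_left (hN n hn) (by positivity)
    _ = 1/2 * (bb α n * t ^ n) := by ring


lemma PhiF_eq (α x : ℝ) : PhiF α x = ∑' n : ℕ, (-1:ℝ)^n * bb α n * (x ^ (1+α) / (1+α)) ^ n := rfl

lemma cont_rpow {α : ℝ} (hα : 0 < α) : Continuous fun x : ℝ => x ^ (1+α) := by
  rw [continuous_iff_continuousAt]
  intro x
  rcases eq_or_ne x 0 with h | h
  · subst h; exact Real.continuousAt_rpow_const 0 _ (Or.inr (by linarith))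
  · exact Real.continuousAt_rpow_const x _ (Or.inl h)

lemma norm_term_le {α : ℝ} (hα : 0 < α) {T x : ℝ} (hx : x ∈ Icc 0 T) (n : ℕ) :
    ‖(-1:ℝ)^n * bb α n * (x ^ (1+α) / (1+α)) ^ n‖ ≤ bb α n * (T ^ (1+α) / (1+α)) ^ n := by
  have hb := bb_pos hα n
  have hxT : x ^ (1+α) ≤ T ^ (1+α) := Real.rpow_le_rpow hx.1 hx.2 (by linarith)
  have hx0 : (0:ℝ) ≤ x ^ (1+α) := Real.rpow_nonneg hx.1 _
  have h1 : (0:ℝ) < 1 + α := by linarith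
  have hy : (0:ℝ) ≤ x ^ (1+α) / (1+α) := div_nonneg hx0 h1.le
  rw [norm_mul, norm_mul, norm_pow, norm_neg, norm_one, one_pow, one_mul, norm_pow]
  rw [Real.norm_of_nonneg hb.le, Real.norm_of_nonneg hy]
  refine mul_le_mul_of_nonneg_left (pow_le_pow_left₀ hy ?_ n) hb.le
  gcongr

lemma summable_phi {α : ℝ} (hα : 0 < α) (hα1 : α < 1) {x : ℝ} (hx : 0 ≤ x) :
    Summable (fun n => (-1:ℝ)^n * bb α n * (x ^ (1+α) / (1+α)) ^ n) := by
  refine Summable.of_norm (Summable.of_nonneg_of_le (fun n => norm_nonneg _)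
    (fun n => norm_term_le hα (mem_Icc.2 ⟨hx, le_refl x⟩) n) ?_)
  exact summable_bt hα hα1 (div_nonneg (Real.rpow_nonneg hx _) (by linarith))

lemma contPhi {α : ℝ} (hα : 0 < α) (hα1 : α < 1) (T : ℝ) :
    ContinuousOn (PhiF α) (Icc 0 T) := by
  rcases le_or_gt T 0 with hT | hT
  · refine Set.Subsingleton.continuousOn ?_ _
    intro a ha b hb
    have := ha.1; have := ha.2; have := hb.1; have := hb.2
    linarith
  · have hu : Summable (fun n => bb α n * (T ^ (1+α) / (1+α)) ^ n) :=
      summable_bt hα hα1 (div_nonneg (Real.rpow_nonneg hT.le _) (by linarith))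
    have := tendstoUniformlyOn_tsum_nat hu
      (f := fun n x => (-1:ℝ)^n * bb α n * (x ^ (1+α) / (1+α)) ^ n)
      (s := Icc 0 T) (fun n x hx => norm_term_le hα hx n)
    refine this.continuousOn ?_
    refine Eventually.frequently ?_
    filter_upwards with N
    refine continuousOn_finset_sum _ fun n _ => Continuous.continuousOn ?_
    exact continuous_const.mul (((cont_rpow hα).div_const _).pow n)

lemma PhiF_zero {α : ℝ} (hα : 0 < α) : PhiF α 0 = 1 := by
  rw [PhiF_eq]
  rw [tsum_eq_single 0 ?_]
  · norm_num [bb]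
  · intro n hn
    have h0 : (0:ℝ) ^ (1+α) = 0 := Real.zero_rpow (by positivity)
    rw [h0]
    simp [zero_pow hn]

/-- Real Beta integral. -/
lemma real_beta {u v : ℝ} (hu : 0 < u) (hv : 0 < v) :
    ∫ s in (0:ℝ)..1, s ^ (u-1) * (1-s) ^ (v-1) =
      Real.Gamma u * Real.Gamma v / Real.Gamma (u+v) := by
  have huv : 0 < Real.Gamma (u+v) := Real.Gamma_pos_of_pos (by linarith)
  have h := Complex.Gamma_mul_Gamma_eq_betaIntegral
    (s := (u:ℂ)) (t := (v:ℂ)) (by simpa using hu) (by simpa using hv)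
  have hbeta : Complex.betaIntegral u v =
      ((∫ s in (0:ℝ)..1, s ^ (u-1) * (1-s) ^ (v-1) : ℝ) : ℂ) := by
    rw [Complex.betaIntegral, ← intervalIntegral.integral_ofReal]
    refine intervalIntegral.integral_congr fun s hs => ?_
    rw [uIcc_of_le (by norm_num : (0:ℝ) ≤ 1)] at hs
    have hs0 : (0:ℝ) ≤ s := hs.1
    have hs1 : (0:ℝ) ≤ 1 - s := by linarith [hs.2]
    push_cast
    rw [Complex.ofReal_cpow hs0, Complex.ofReal_cpow hs1]
    push_cast
    ring
  rw [hbeta] at h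
  have huv' : ((u:ℂ) + v) = ((u + v : ℝ) : ℂ) := by push_cast; ring
  rw [huv', Complex.Gamma_ofReal, Complex.Gamma_ofReal, Complex.Gamma_ofReal] at h
  have : ((Real.Gamma u * Real.Gamma v : ℝ) : ℂ)
      = ((Real.Gamma (u+v) * ∫ s in (0:ℝ)..1, s ^ (u-1) * (1-s) ^ (v-1) : ℝ) : ℂ) := by
    push_cast; exact_mod_cast h
  have h2 : Real.Gamma u * Real.Gamma v
      = Real.Gamma (u+v) * ∫ s in (0:ℝ)..1, s ^ (u-1) * (1-s) ^ (v-1) := by exact_mod_cast this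
  field_simp [h2]
  rw [h2]; ring

/-- Scaled Beta integral on `0..x`. -/
lemma scaled_beta {α : ℝ} (hα : 0 < α) {p x : ℝ} (hp : 0 < p) (hx : 0 < x) :
    ∫ s in (0:ℝ)..x, (x-s) ^ (α-1) * s ^ p
      = Real.Gamma (p+1) * Real.Gamma α / Real.Gamma (p+1+α) * x ^ (p+α) := by
  have key : ∫ u in (0:ℝ)..1, (x - x*u) ^ (α-1) * (x*u) ^ p
      = x⁻¹ • ∫ s in (0:ℝ)..x, (x-s) ^ (α-1) * s ^ p := by
    have := intervalIntegral.integral_comp_mul_left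
      (f := fun s => (x-s) ^ (α-1) * s ^ p) (a := (0:ℝ)) (b := 1) (c := x) hx.ne'
    simpa using this
  have hval : ∫ u in (0:ℝ)..1, (x - x*u) ^ (α-1) * (x*u) ^ p
      = x ^ (α-1+p) * (Real.Gamma (p+1) * Real.Gamma α / Real.Gamma (p+1+α)) := by
    have hcong : ∫ u in (0:ℝ)..1, (x - x*u) ^ (α-1) * (x*u) ^ p
        = ∫ u in (0:ℝ)..1, x ^ (α-1+p) * (u ^ ((p+1)-1) * (1-u) ^ (α-1)) := by
      refine intervalIntegral.integral_congr fun u hu => ?_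
      rw [uIcc_of_le (by norm_num : (0:ℝ) ≤ 1)] at hu
      have hu0 : (0:ℝ) ≤ u := hu.1
      have hu1 : (0:ℝ) ≤ 1 - u := by linarith [hu.2]
      have e1 : x - x*u = x * (1-u) := by ring
      rw [e1, Real.mul_rpow hx.le hu1, Real.mul_rpow hx.le hu0,
        Real.rpow_add hx]
      ring_nf
    rw [hcong, intervalIntegral.integral_const_mul, real_beta (by linarith) hα]
  rw [hval] at key
  have hxne : x ≠ 0 := hx.ne'
  have : x • (x⁻¹ • ∫ s in (0:ℝ)..x, (x-s) ^ (α-1) * s ^ p)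
      = ∫ s in (0:ℝ)..x, (x-s) ^ (α-1) * s ^ p := by
    rw [smul_smul, mul_inv_cancel₀ hxne, one_smul]
  rw [← this, ← key, smul_eq_mul]
  have h1 : (1:ℝ) + (α-1+p) ≠ 0 := by
    have h2 : (1:ℝ) + (α-1+p) = α + p := by ring
    rw [h2]; positivity
  have hxp : x * x ^ (α-1+p) = x ^ (p+α) := by
    rw [← Real.rpow_one_add' hx.le h1]; congr 1; ring
  rw [← mul_assoc, hxp]; ring


lemma xpow_eq {x : ℝ} (hx : 0 ≤ x) (β : ℝ) (m : ℕ) : x ^ (β * m) = (x ^ β) ^ m := by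
  rw [Real.rpow_mul hx, Real.rpow_natCast]

lemma kernel_int {α : ℝ} (hα : 0 < α) (x a b : ℝ) :
    IntervalIntegrable (fun s => (x-s) ^ (α-1)) volume a b := by
  have h := (intervalIntegral.intervalIntegrable_rpow' (a := x - a) (b := x - b)
      (by linarith : (-1:ℝ) < α - 1)).comp_sub_left x
  simpa using h

/-- Pointwise term identity on `[0, x]`. -/
lemma term_eq {α : ℝ} (hα : 0 < α) {s : ℝ} (hs : 0 ≤ s) (x C : ℝ) (n : ℕ) :
    (x-s) ^ (α-1) * (s * (C * (s ^ (1+α) / (1+α)) ^ n))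
      = (C / (1+α)^n) * ((x-s) ^ (α-1) * s ^ ((1+α)*n+1)) := by
  have hβ : (0:ℝ) < 1 + α := by linarith
  rcases eq_or_lt_of_le hs with h0 | h0
  · rw [← h0]
    rw [Real.zero_rpow (by positivity : ((1:ℝ)+α)*n+1 ≠ 0)]
    ring
  · have h1 : (s ^ (1+α) / (1+α)) ^ n = s ^ ((1+α)*(n:ℝ)) / (1+α)^n := by
      rw [div_pow, xpow_eq hs]
    have h2 : s ^ ((1+α)*(n:ℝ)+1) = s ^ ((1+α)*(n:ℝ)) * s := Real.rpow_add_one h0.ne' _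
    rw [h1, h2]
    ring

/-- Value of the per-term integral. -/
lemma term_integral {α : ℝ} (hα : 0 < α) (hα1 : α < 1) {x : ℝ} (hx : 0 < x) (C : ℝ) (n : ℕ) :
    ∫ s in (0:ℝ)..x, (x-s) ^ (α-1) * (s * (C * (s ^ (1+α) / (1+α)) ^ n))
      = (C / (1+α)^n) *
        (Real.Gamma ((1+α)*n+2) * Real.Gamma α / Real.Gamma ((1+α)*n+2+α) * x ^ ((1+α)*n+1+α)) := by
  have hcong : ∫ s in (0:ℝ)..x, (x-s) ^ (α-1) * (s * (C * (s ^ (1+α) / (1+α)) ^ n))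
      = ∫ s in (0:ℝ)..x, (C / (1+α)^n) * ((x-s) ^ (α-1) * s ^ ((1+α)*n+1)) := by
    refine intervalIntegral.integral_congr fun s hs => ?_
    rw [uIcc_of_le hx.le] at hs
    exact term_eq hα hs.1 x C n
  rw [hcong, intervalIntegral.integral_const_mul]
  have hp : (0:ℝ) < (1+α)*n+1 := by positivity
  rw [scaled_beta hα hp hx]
  have e1 : (1+α)*(n:ℝ)+1+1 = (1+α)*n+2 := by ring
  rw [e1]

noncomputable def FF (α x : ℝ) (n : ℕ) (s : ℝ) : ℝ :=
  (x-s) ^ (α-1) * (s * ((-1:ℝ)^n * bb α n * (s ^ (1+α) / (1+α)) ^ n))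

lemma FF_apply (α x : ℝ) (n : ℕ) (s : ℝ) : FF α x n s
    = (x-s) ^ (α-1) * (s * ((-1:ℝ)^n * bb α n * (s ^ (1+α) / (1+α)) ^ n)) := rfl

set_option maxHeartbeats 1000000 in
/-- The integral equation. -/
lemma eqn {α : ℝ} (hα : 0 < α) (hα1 : α < 1) {x : ℝ} (hx : 0 < x) :
    PhiF α x = 1 - (1/((1+α) * Real.Gamma α)) *
      ∫ s in (0:ℝ)..x, (x-s) ^ (α-1) * (s * PhiF α s) := by
  have hβ : (0:ℝ) < 1 + α := by linarith
  have hΓα : 0 < Real.Gamma α := Real.Gamma_pos_of_pos hα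
  set T : ℝ := x ^ (1+α) / (1+α) with hT
  have hT0 : 0 ≤ T := div_nonneg (Real.rpow_nonneg hx.le _) hβ.le
  -- x^((1+α)(n+1)) = (1+α)^(n+1) * T^(n+1)
  have hxT : ∀ m : ℕ, x ^ ((1+α)*(m:ℝ)) = (1+α)^m * T ^ m := by
    intro m
    rw [xpow_eq hx.le, hT, div_pow, mul_div_cancel₀]
    positivity
  clear_value T
  -- value of each integral, in terms of T
  have hval : ∀ n : ℕ, ∫ s in (0:ℝ)..x, FF α x n s
      = (-1:ℝ)^n * ((1+α) * Real.Gamma α) * (bb α (n+1) * T^(n+1)) := by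
    intro n
    simp only [FF_apply]
    rw [term_integral hα hα1 hx _ n]
    have e3 : (1+α)*(n:ℝ)+1+α = (1+α)*((n:ℝ)+1) := by ring
    have e4 : ((n:ℝ)+1) = ((n+1 : ℕ) : ℝ) := by push_cast; ring
    rw [e3, e4, hxT (n+1)]
    rw [bb_succ]
    have hΓd : Real.Gamma (α * n + n + 2) = Real.Gamma ((1+α)*n+2) := by ring_nf
    have hΓd2 : Real.Gamma (α * (n+1) + n + 2) = Real.Gamma ((1+α)*n+2+α) := by ring_nf
    have hG2 : 0 < Real.Gamma ((1+α)*n+2+α) := by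
      refine Real.Gamma_pos_of_pos ?_
      have : (0:ℝ) ≤ (1+α)*n := by positivity
      linarith
    rw [hΓd, hΓd2]
    field_simp
    ring
  -- the norm integrals
  have hnorm : ∀ n : ℕ, (∫ s in Ioc (0:ℝ) x, ‖FF α x n s‖)
      = ((1+α) * Real.Gamma α) * (bb α (n+1) * T^(n+1)) := by
    intro n
    have habs : ∀ s ∈ Ioc (0:ℝ) x, ‖FF α x n s‖
        = (x-s) ^ (α-1) * (s * (bb α n * (s ^ (1+α) / (1+α)) ^ n)) := by
      intro s hs
      have hs0 : 0 < s := hs.1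
      have hsx : s ≤ x := hs.2
      have h1 : (0:ℝ) ≤ (x-s) ^ (α-1) := Real.rpow_nonneg (by linarith) _
      have h2 : (0:ℝ) ≤ s ^ (1+α) / (1+α) :=
        div_nonneg (Real.rpow_nonneg hs0.le _) hβ.le
      have hb := bb_pos hα n
      simp only [FF_apply, norm_mul, norm_pow, norm_neg, norm_one, one_pow, one_mul]
      rw [Real.norm_of_nonneg h1, Real.norm_of_nonneg hs0.le, Real.norm_of_nonneg hb.le,
        Real.norm_of_nonneg h2]
    rw [setIntegral_congr_fun measurableSet_Ioc habs,
      ← intervalIntegral.integral_of_le hx.le]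
    rw [term_integral hα hα1 hx _ n]
    have e3 : (1+α)*(n:ℝ)+1+α = (1+α)*((n:ℝ)+1) := by ring
    have e4 : ((n:ℝ)+1) = ((n+1 : ℕ) : ℝ) := by push_cast; ring
    rw [e3, e4, hxT (n+1), bb_succ]
    have hΓd : Real.Gamma (α * n + n + 2) = Real.Gamma ((1+α)*n+2) := by ring_nf
    have hΓd2 : Real.Gamma (α * (n+1) + n + 2) = Real.Gamma ((1+α)*n+2+α) := by ring_nf
    have hG2 : 0 < Real.Gamma ((1+α)*n+2+α) := by
      refine Real.Gamma_pos_of_pos ?_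
      have h5 : (0:ℝ) ≤ (1+α)*n := by positivity
      linarith
    rw [hΓd, hΓd2]
    field_simp
    ring
  -- summability of the norm integrals
  have hsum1 : Summable (fun n => bb α (n+1) * T^(n+1)) := by
    have := summable_bt hα hα1 hT0
    exact (summable_nat_add_iff 1).mpr this
  -- integrability of each term
  have hFint : ∀ n : ℕ, IntervalIntegrable (FF α x n) volume 0 x := by
    intro n
    have hg : Continuous fun s : ℝ => s * ((-1:ℝ)^n * bb α n * (s ^ (1+α) / (1+α)) ^ n) :=
      continuous_id.mul (continuous_const.mul (((cont_rpow hα).div_const _).pow n))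
    exact (kernel_int hα x 0 x).mul_continuousOn hg.continuousOn
  have hFiOn : ∀ n : ℕ, Integrable (FF α x n) (volume.restrict (Ioc 0 x)) := fun n =>
    (intervalIntegrable_iff_integrableOn_Ioc_of_le hx.le).mp (hFint n)
  -- interchange sum and integral
  have hinter : ∑' n, (∫ s in Ioc (0:ℝ) x, FF α x n s) = ∫ s in Ioc (0:ℝ) x, (∑' n, FF α x n s) := by
    refine integral_tsum_of_summable_integral_norm hFiOn ?_
    refine Summable.congr ((hsum1.mul_left ((1+α) * Real.Gamma α))) ?_
    intro n
    exact (hnorm n).symm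
  -- pointwise identity
  have hpt : ∀ s : ℝ, (x-s) ^ (α-1) * (s * PhiF α s) = ∑' n, FF α x n s := by
    intro s
    rw [PhiF_eq, ← tsum_mul_left, ← tsum_mul_left]
    exact tsum_congr fun n => (FF_apply α x n s).symm
  -- the main integral as a sum
  have hmain : (∫ s in (0:ℝ)..x, (x-s) ^ (α-1) * (s * PhiF α s))
      = ∑' n, ∫ s in (0:ℝ)..x, FF α x n s := by
    rw [intervalIntegral.integral_of_le hx.le]
    simp_rw [hpt]
    rw [← hinter]
    refine tsum_congr fun n => ?_
    rw [intervalIntegral.integral_of_le hx.le]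
  -- assemble
  have hΓβne : ((1:ℝ)+α) * Real.Gamma α ≠ 0 := by positivity
  rw [PhiF_eq, Summable.tsum_eq_zero_add (summable_phi hα hα1 hx.le)]
  have h0 : (-1:ℝ)^(0:ℕ) * bb α 0 * (x ^ (1+α) / (1+α)) ^ (0:ℕ) = 1 := by
    simp [bb]
  rw [h0, hmain, ← tsum_mul_left, sub_eq_add_neg, ← tsum_neg]
  congr 1
  refine tsum_congr fun n => ?_
  rw [hval n, ← hT, pow_succ]
  field_simp


end PhiAux

open PhiAux

/-- positivity of `Φ` on `[0,∞)`. -/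
theorem Phi_pos (α : ℝ) (hα : α ∈ Set.Ioo (0:ℝ) 1) :
    ∀ x ≥ (0:ℝ), 0 < PhiF α x := by
  obtain ⟨hα0, hα1⟩ := hα
  by_contra hcon
  push_neg at hcon
  obtain ⟨X, hX0, hXle⟩ := hcon
  have hcont : ContinuousOn (PhiF α) (Icc 0 X) := contPhi hα0 hα1 X
  -- the set of nonpositivity
  set S : Set ℝ := Icc 0 X ∩ (PhiF α) ⁻¹' (Iic 0) with hS
  have hSclosed : IsClosed S := hcont.preimage_isClosed_of_isClosed isClosed_Icc isClosed_Iic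
  have hSne : S.Nonempty := ⟨X, ⟨hX0, le_refl X⟩, hXle⟩
  have hSbdd : BddBelow S := ⟨0, fun y hy => hy.1.1⟩
  set x₀ : ℝ := sInf S with hx₀
  have hx₀S : x₀ ∈ S := hSclosed.csInf_mem hSne hSbdd
  have hx₀mem : x₀ ∈ Icc 0 X := hx₀S.1
  have hx₀le : PhiF α x₀ ≤ 0 := hx₀S.2
  have hΦ0 : PhiF α 0 = 1 := PhiF_zero hα0
  have hx₀pos : 0 < x₀ := by
    rcases eq_or_lt_of_le hx₀mem.1 with h | h
    · exfalso; rw [← h, hΦ0] at hx₀le; linarith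
    · exact h
  -- positivity before x₀
  have hpos : ∀ y, 0 ≤ y → y < x₀ → 0 < PhiF α y := by
    intro y hy0 hyx
    by_contra hyneg
    push_neg at hyneg
    have : y ∈ S := ⟨⟨hy0, hyx.le.trans hx₀mem.2⟩, hyneg⟩
    exact absurd (csInf_le hSbdd this) (not_le.mpr hyx)
  -- PhiF α x₀ = 0
  have hzero : PhiF α x₀ = 0 := by
    refine le_antisymm hx₀le ?_
    have hne : (𝓝[Ico 0 x₀] x₀).NeBot := by
      refine mem_closure_iff_nhdsWithin_neBot.mp ?_
      rw [closure_Ico hx₀pos.ne]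
      exact ⟨hx₀mem.1, le_refl _⟩
    have hc : ContinuousWithinAt (PhiF α) (Ico 0 x₀) x₀ :=
      (hcont x₀ hx₀mem).mono (fun y hy => ⟨hy.1, hy.2.le.trans hx₀mem.2⟩)
    refine ge_of_tendsto hc ?_
    filter_upwards [self_mem_nhdsWithin] with y hy
    exact (hpos y hy.1 hy.2).le
  have hΦnonneg : ∀ s ∈ Icc (0:ℝ) x₀, 0 ≤ PhiF α s := by
    intro s hs
    rcases eq_or_lt_of_le hs.2 with h | h
    · rw [h, hzero]
    · exact (hpos s hs.1 h).le
  -- constants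
  have hβ : (0:ℝ) < 1 + α := by linarith
  have hΓα : 0 < Real.Gamma α := Real.Gamma_pos_of_pos hα0
  set c0 : ℝ := 1/((1+α) * Real.Gamma α) with hc0def
  have hc0 : 0 < c0 := by rw [hc0def]; positivity
  -- choice of ε
  set q : ℝ := α/(2*c0*x₀) with hqdef
  have hq : 0 < q := by rw [hqdef]; positivity
  set ε : ℝ := min (x₀/2) (q ^ (α⁻¹)) with hεdef
  have hε0 : 0 < ε := lt_min (by linarith) (Real.rpow_pos_of_pos hq _)
  have hεhalf : ε ≤ x₀/2 := min_le_left _ _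
  have hεα : c0 * x₀ * ε^α / α ≤ 1/2 := by
    have h1 : ε ^ α ≤ q := by
      calc ε ^ α ≤ (q ^ (α⁻¹)) ^ α :=
            Real.rpow_le_rpow hε0.le (min_le_right _ _) hα0.le
        _ = q := Real.rpow_inv_rpow hq.le hα0.ne'
    have h2 : c0 * x₀ * ε^α / α ≤ c0 * x₀ * q / α := by gcongr
    have h3 : c0 * x₀ * q / α = 1/2 := by
      rw [hqdef]; field_simp
    linarith
  set xb : ℝ := x₀ - ε with hxbdef
  have hxb0 : 0 < xb := by rw [hxbdef]; linarith
  have hxbx₀ : xb < x₀ := by rw [hxbdef]; linarith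
  -- maximum of PhiF on [xb, x₀]
  obtain ⟨y, hymem, hymax'⟩ := IsCompact.exists_isMaxOn isCompact_Icc
    (⟨xb, le_refl xb, hxbx₀.le⟩ : (Icc xb x₀).Nonempty)
    ((contPhi hα0 hα1 x₀).mono (fun s hs => ⟨hxb0.le.trans hs.1, hs.2⟩))
  have hymax : ∀ s ∈ Icc xb x₀, PhiF α s ≤ PhiF α y := fun s hs => hymax' hs
  set M : ℝ := PhiF α y with hMdef
  have hMpos : 0 < M := lt_of_lt_of_le (hpos xb hxb0.le hxbx₀)
    (hymax xb ⟨le_refl xb, hxbx₀.le⟩)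
  have hyx₀ : y < x₀ := by
    rcases eq_or_lt_of_le hymem.2 with h | h
    · exfalso; rw [hMdef, h, hzero] at hMpos; exact lt_irrefl 0 hMpos
    · exact h
  have hy0 : 0 < y := lt_of_lt_of_le hxb0 hymem.1
  -- integrability helper
  have hint : ∀ z a b : ℝ, 0 ≤ a → a ≤ b → b ≤ x₀ →
      IntervalIntegrable (fun s => (z-s) ^ (α-1) * (s * PhiF α s)) volume a b := by
    intro z a b ha hab hb
    refine (kernel_int hα0 z a b).mul_continuousOn ?_
    have hsub : uIcc a b ⊆ Icc 0 x₀ := by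
      rw [uIcc_of_le hab]
      exact fun s hs => ⟨ha.trans hs.1, hs.2.trans hb⟩
    exact (continuousOn_id.mul ((contPhi hα0 hα1 x₀).mono hsub)).congr (fun s hs => rfl)
  -- the integral equations
  have ey := eqn hα0 hα1 hy0
  have ex := eqn hα0 hα1 hx₀pos
  rw [hzero] at ex
  rw [← hc0def] at ey ex
  -- comparison on [0, y]
  have hAK : (∫ s in (0:ℝ)..y, (x₀-s) ^ (α-1) * (s * PhiF α s))
      ≤ ∫ s in (0:ℝ)..y, (y-s) ^ (α-1) * (s * PhiF α s) := by
    have hf := hint x₀ 0 y le_rfl hy0.le hyx₀.le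
    have hg := hint y 0 y le_rfl hy0.le hyx₀.le
    refine intervalIntegral.integral_mono_ae_restrict hy0.le hf hg ?_
    have hae1 : ∀ᵐ s ∂(volume.restrict (Icc (0:ℝ) y)), s ≠ y := by
      refine ae_restrict_of_ae ?_
      rw [ae_iff]
      have hset : {a : ℝ | ¬ a ≠ y} = {y} := by ext a; simp
      rw [hset]
      exact measure_singleton y
    filter_upwards [hae1, ae_restrict_mem measurableSet_Icc] with s hsy hsmem
    have hslt : s < y := lt_of_le_of_ne hsmem.2 hsy
    have hk : (x₀-s) ^ (α-1) ≤ (y-s) ^ (α-1) :=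
      Real.rpow_le_rpow_of_nonpos (by linarith) (by linarith) (by linarith)
    have hsp : 0 ≤ s * PhiF α s :=
      mul_nonneg hsmem.1 (hΦnonneg s ⟨hsmem.1, hsmem.2.trans hyx₀.le⟩)
    exact mul_le_mul_of_nonneg_right hk hsp
  -- split the integral
  have hsplit : (∫ s in (0:ℝ)..y, (x₀-s) ^ (α-1) * (s * PhiF α s))
      + (∫ s in y..x₀, (x₀-s) ^ (α-1) * (s * PhiF α s))
      = ∫ s in (0:ℝ)..x₀, (x₀-s) ^ (α-1) * (s * PhiF α s) :=
    intervalIntegral.integral_add_adjacent_intervals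
      (hint x₀ 0 y le_rfl hy0.le hyx₀.le) (hint x₀ y x₀ hy0.le hyx₀.le le_rfl)
  -- bound the tail integral
  have hkernint : IntervalIntegrable (fun s => (x₀-s) ^ (α-1) * (x₀ * M)) volume y x₀ :=
    (kernel_int hα0 x₀ y x₀).mul_continuousOn continuousOn_const
  have hB : (∫ s in y..x₀, (x₀-s) ^ (α-1) * (s * PhiF α s))
      ≤ ∫ s in y..x₀, (x₀-s) ^ (α-1) * (x₀ * M) := by
    refine intervalIntegral.integral_mono_on hyx₀.le
      (hint x₀ y x₀ hy0.le hyx₀.le le_rfl) hkernint ?_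
    intro s hs
    have h1 : 0 ≤ (x₀-s) ^ (α-1) := Real.rpow_nonneg (by linarith [hs.2]) _
    refine mul_le_mul_of_nonneg_left ?_ h1
    have hs0 : (0:ℝ) ≤ s := hy0.le.trans hs.1
    have hsmax : PhiF α s ≤ M := hymax s ⟨hymem.1.trans hs.1, hs.2⟩
    have hΦs : 0 ≤ PhiF α s := hΦnonneg s ⟨hs0, hs.2⟩
    calc s * PhiF α s ≤ x₀ * PhiF α s := mul_le_mul_of_nonneg_right hs.2 hΦs
      _ ≤ x₀ * M := mul_le_mul_of_nonneg_left hsmax hx₀pos.le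
  -- evaluate constant integral
  have hkval : (∫ s in y..x₀, (x₀-s) ^ (α-1)) = (x₀-y)^α / α := by
    have h1 : (∫ s in y..x₀, (x₀-s) ^ (α-1))
        = ∫ u in x₀-x₀..x₀-y, u ^ (α-1) :=
      intervalIntegral.integral_comp_sub_left (fun u => u ^ (α-1)) x₀
    rw [h1, sub_self, integral_rpow (Or.inl (by linarith : (-1:ℝ) < α-1))]
    rw [show α - 1 + 1 = α from by ring, Real.zero_rpow hα0.ne']
    rw [sub_zero]
  have hBconst : (∫ s in y..x₀, (x₀-s) ^ (α-1) * (x₀ * M))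
      = (x₀ * M) * ((x₀-y)^α / α) := by
    rw [intervalIntegral.integral_mul_const, hkval]
    ring
  -- assemble the contradiction
  have hMeq : M = c0 * (∫ s in (0:ℝ)..x₀, (x₀-s) ^ (α-1) * (s * PhiF α s))
      - c0 * (∫ s in (0:ℝ)..y, (y-s) ^ (α-1) * (s * PhiF α s)) := by
    rw [hMdef, ey]; linarith [ex]
  have hMB : M ≤ c0 * ((x₀ * M) * ((x₀-y)^α / α)) := by
    have h1 := mul_le_mul_of_nonneg_left hAK hc0.le
    have h2 := mul_le_mul_of_nonneg_left hB hc0.le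
    rw [hBconst] at h2
    have h3 : M = c0 * ((∫ s in (0:ℝ)..y, (x₀-s) ^ (α-1) * (s * PhiF α s))
        + (∫ s in y..x₀, (x₀-s) ^ (α-1) * (s * PhiF α s)))
        - c0 * (∫ s in (0:ℝ)..y, (y-s) ^ (α-1) * (s * PhiF α s)) := by
      rw [hMeq, ← hsplit]
    linarith [h1, h2, h3]
  have hxyε : x₀ - y ≤ ε := by
    have := hymem.1
    rw [hxbdef] at this
    linarith
  have h5 : (x₀-y)^α ≤ ε^α := Real.rpow_le_rpow (by linarith) hxyε hα0.le
  have hfin : M ≤ M * (1/2) := by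
    calc M ≤ c0 * ((x₀ * M) * ((x₀-y)^α / α)) := hMB
      _ = M * (c0 * x₀ * (x₀-y)^α / α) := by ring
      _ ≤ M * (c0 * x₀ * ε^α / α) := by
          refine mul_le_mul_of_nonneg_left ?_ hMpos.le
          gcongr
      _ ≤ M * (1/2) := mul_le_mul_of_nonneg_left hεα hMpos.le
  linarith
end

section
/- Let α ∈ (0,1). The function ℰ is twice continuously differentiable on (0,∞)², it satisfies the space-fractional diffusion equation ∂ℰ/∂t − ∂/∂x (D^α_x ℰ) = 0 at every (x,t) ∈ (0,∞)², and it is self-similar: for every λ > 0 and every (x,t) ∈ (0,∞)², ℰ(x,t) = λ^{1/(1+α)} ℰ(λ^{1/(1+α)} x, λ t). -/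
open MeasureTheory Real Set

/-- The normalizing constant `a₀ = (2∫₀^∞ Φ)⁻¹`. -/
noncomputable def a0 (α : ℝ) : ℝ := (2 * ∫ x in Set.Ioi (0:ℝ), PhiF α x)⁻¹

/-- The fundamental solution `ℰ(x,t) = a₀ t^{−1/(1+α)} Φ(|x| t^{−1/(1+α)})` for `t > 0`,
extended by `0` for `t ≤ 0`. -/
noncomputable def fundSol (α : ℝ) (x t : ℝ) : ℝ :=
  if 0 < t then a0 α * t ^ (-(1/(1+α))) * PhiF α (|x| * t ^ (-(1/(1+α)))) else 0

open Filter

namespace FSaux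

/-- coefficients are "entire": Σ |c n| R^n converges for every R > 0 -/
def Entire (c : ℕ → ℝ) : Prop := ∀ R : ℝ, 0 < R → Summable (fun n => |c n| * R ^ n)

noncomputable def G (c : ℕ → ℝ) (z : ℝ) : ℝ := ∑' n : ℕ, c n * z ^ n

/-- derivative coefficients -/
noncomputable def dsh (c : ℕ → ℝ) (n : ℕ) : ℝ := (n + 1 : ℝ) * c (n + 1)

lemma Entire.summable_aux {c : ℕ → ℝ} (hc : Entire c) {R : ℝ} (hR : 0 < R) :
    Summable (fun n : ℕ => (n : ℝ) * |c n| * R ^ (n - 1)) := by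
  have h2 : Summable (fun n : ℕ => R⁻¹ * (|c n| * (2 * R) ^ n)) :=
    (hc (2 * R) (by linarith)).mul_left _
  apply h2.of_nonneg_of_le
  · intro n; positivity
  · intro n
    rcases Nat.eq_zero_or_pos n with h | h
    · subst h; simp; positivity
    · have hrw : R ^ (n - 1) = R⁻¹ * R ^ n := by
        rw [eq_inv_mul_iff_mul_eq₀ (ne_of_gt hR), mul_comm, ← pow_succ]
        congr 1; omega
      rw [hrw]
      have hn2 : (n : ℝ) ≤ 2 ^ n := by exact_mod_cast (Nat.lt_two_pow_self (n := n)).le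
      have : (n : ℝ) * |c n| * (R⁻¹ * R ^ n) = R⁻¹ * (|c n| * ((n:ℝ) * R ^ n)) := by ring
      rw [this]
      rw [mul_pow]
      gcongr

lemma Entire.dsh {c : ℕ → ℝ} (hc : Entire c) : Entire (FSaux.dsh c) := by
  intro R hR
  have h := (hc.summable_aux hR).comp_injective (add_left_injective 1)
  apply h.of_nonneg_of_le (fun n => by positivity)
  intro n
  simp only [Function.comp, FSaux.dsh, Nat.add_sub_cancel]
  rw [abs_mul]
  have h1 : |(n + 1 : ℝ)| = ((n : ℝ) + 1) := abs_of_nonneg (by positivity)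
  rw [h1]
  push_cast
  ring_nf
  exact le_rfl

lemma Entire.summable_pt {c : ℕ → ℝ} (hc : Entire c) (z : ℝ) :
    Summable (fun n => c n * z ^ n) := by
  apply Summable.of_norm
  apply (hc (|z| + 1) (by positivity)).of_nonneg_of_le (fun n => norm_nonneg _)
  intro n
  rw [norm_mul, norm_pow]
  have h1 : ‖c n‖ = |c n| := rfl
  have h2 : ‖z‖ = |z| := rfl
  rw [h1, h2]
  have hz := abs_nonneg z
  gcongr <;> linarith


lemma Entire.hasDerivAt {c : ℕ → ℝ} (hc : Entire c) (z : ℝ) :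
    HasDerivAt (G c) (G (FSaux.dsh c) z) z := by
  set R := |z| + 1 with hRdef
  have hR : 0 < R := by positivity
  have hz : z ∈ Metric.ball (0 : ℝ) R := by
    simp [Real.dist_eq, hRdef]
  have hbound : ∀ (n : ℕ) (y : ℝ), y ∈ Metric.ball (0:ℝ) R →
      ‖c n * ((n : ℝ) * y ^ (n - 1))‖ ≤ (n : ℝ) * |c n| * R ^ (n - 1) := by
    intro n y hy
    have hyR : |y| ≤ R := by
      have := hy
      simp [Real.dist_eq] at this
      linarith
    rw [norm_mul, norm_mul, Real.norm_eq_abs, Real.norm_eq_abs, Real.norm_eq_abs]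
    rw [abs_of_nonneg (by positivity : (0:ℝ) ≤ (n:ℝ)), abs_pow]
    calc |c n| * ((n:ℝ) * |y| ^ (n-1)) ≤ |c n| * ((n:ℝ) * R ^ (n-1)) := by
          gcongr
      _ = (n : ℝ) * |c n| * R ^ (n - 1) := by ring
  have key := hasDerivAt_tsum_of_isPreconnected (hc.summable_aux hR)
    Metric.isOpen_ball (convex_ball (0:ℝ) R).isPreconnected
    (fun n y _ => (hasDerivAt_pow n y).const_mul (c n))
    (fun n y hy => hbound n y hy)
    (Metric.mem_ball_self hR)
    (hc.summable_pt 0) hz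
  have hsum : Summable (fun n => c n * ((n : ℝ) * z ^ (n - 1))) := by
    apply Summable.of_norm
    apply ((hc.summable_aux hR).of_nonneg_of_le (fun n => norm_nonneg _))
    intro n
    exact hbound n z hz
  have heq : (∑' n : ℕ, c n * ((n : ℝ) * z ^ (n - 1))) = G (FSaux.dsh c) z := by
    rw [Summable.tsum_eq_zero_add hsum, G]
    simp only [Nat.cast_zero, zero_mul, mul_zero, zero_add, Nat.add_sub_cancel]
    apply tsum_congr
    intro n
    simp only [FSaux.dsh]
    push_cast
    ring
  rw [← heq]
  exact key

lemma Entire.differentiable {c : ℕ → ℝ} (hc : Entire c) : Differentiable ℝ (G c) :=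
  fun z => (hc.hasDerivAt z).differentiableAt

lemma Entire.deriv_G {c : ℕ → ℝ} (hc : Entire c) : deriv (G c) = G (FSaux.dsh c) :=
  funext fun z => (hc.hasDerivAt z).deriv

lemma Entire.contDiffNat : ∀ (n : ℕ) {c : ℕ → ℝ}, Entire c → ContDiff ℝ n (G c)
  | 0, c, hc => contDiff_zero.2 hc.differentiable.continuous
  | (n+1), c, hc => by
      have hcast : ((n+1 : ℕ) : WithTop ℕ∞) = (n : WithTop ℕ∞) + 1 := by push_cast; rfl
      rw [hcast, contDiff_succ_iff_deriv]
      refine ⟨hc.differentiable, ?_, ?_⟩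
      · intro h; exact absurd h (by simp)
      · rw [hc.deriv_G]; exact Entire.contDiffNat n hc.dsh

lemma Entire.contDiffTwo {c : ℕ → ℝ} (hc : Entire c) : ContDiff ℝ 2 (G c) := by
  have := hc.contDiffNat 2
  norm_num at this
  exact this


lemma gautschi {x av : ℝ} (hx : 0 < x) (h0 : 0 < av) (h1 : av < 1) :
    Real.Gamma (x + 1) ≤ Real.Gamma (x + av) * (x + av) ^ (1 - av) := by
  have hxa : 0 < x + av := by linarith
  have hxa1 : 0 < x + av + 1 := by linarith
  have hcv := Real.convexOn_log_Gamma.2 (mem_Ioi.2 hxa) (mem_Ioi.2 hxa1)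
    (le_of_lt h0) (by linarith : (0:ℝ) ≤ 1 - av) (by ring)
  have hcomb : av • (x + av) + (1 - av) • (x + av + 1) = x + 1 := by
    simp only [smul_eq_mul]; ring
  rw [hcomb] at hcv
  simp only [Function.comp] at hcv
  have hG1 : Real.Gamma (x + av + 1) = (x + av) * Real.Gamma (x + av) :=
    Real.Gamma_add_one (ne_of_gt hxa)
  have hGpos : 0 < Real.Gamma (x + av) := Real.Gamma_pos_of_pos hxa
  have hGpos1 : 0 < Real.Gamma (x + 1) := Real.Gamma_pos_of_pos (by linarith)
  rw [hG1, Real.log_mul (ne_of_gt hxa) (ne_of_gt hGpos)] at hcv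
  have hrw : av * Real.log (Real.Gamma (x + av))
      + (1 - av) * (Real.log (x + av) + Real.log (Real.Gamma (x + av)))
      = Real.log (Real.Gamma (x + av)) + (1 - av) * Real.log (x + av) := by ring
  simp only [smul_eq_mul] at hcv
  rw [hrw] at hcv
  have := Real.exp_le_exp.2 hcv
  rw [Real.exp_log hGpos1, Real.exp_add, Real.exp_log hGpos] at this
  calc Real.Gamma (x+1) ≤ Real.Gamma (x+av) * Real.exp ((1-av) * Real.log (x+av)) := this
    _ = Real.Gamma (x + av) * (x + av) ^ (1 - av) := by
        rw [Real.rpow_def_of_pos hxa]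
        ring_nf

lemma gamma_ratio {x av : ℝ} (hx : 1 ≤ x) (h0 : 0 < av) (h1 : av < 1) :
    Real.Gamma x ≤ 2 * x ^ (-av) * Real.Gamma (x + av) := by
  have hxpos : 0 < x := by linarith
  have hGpos : 0 < Real.Gamma (x + av) := Real.Gamma_pos_of_pos (by linarith)
  have h2 : Real.Gamma (x + 1) = x * Real.Gamma x := Real.Gamma_add_one (ne_of_gt hxpos)
  have h3 := gautschi hxpos h0 h1
  have h4 : (x + av) ^ (1 - av) ≤ (2 * x) ^ (1 - av) := by
    apply Real.rpow_le_rpow (by linarith) (by linarith) (by linarith)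
  have h5 : (2 * x) ^ (1 - av) = 2 ^ (1 - av) * x ^ (1 - av) :=
    Real.mul_rpow (by norm_num) (le_of_lt hxpos)
  have h6 : (2:ℝ) ^ (1 - av) ≤ 2 := by
    nth_rewrite 2 [show (2:ℝ) = 2 ^ (1:ℝ) by rw [Real.rpow_one]]
    apply Real.rpow_le_rpow_of_exponent_le (by norm_num) (by linarith)
  have h7 : x ^ (1 - av) = x ^ (-av) * x := by
    rw [show (1 : ℝ) - av = -av + 1 by ring, Real.rpow_add hxpos, Real.rpow_one]
  have hx' : 0 < x ^ (-av) := Real.rpow_pos_of_pos hxpos _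
  have : x * Real.Gamma x ≤ Real.Gamma (x + av) * (2 * (x ^ (-av) * x)) := by
    calc x * Real.Gamma x = Real.Gamma (x + 1) := h2.symm
      _ ≤ Real.Gamma (x + av) * (x + av) ^ (1 - av) := h3
      _ ≤ Real.Gamma (x + av) * ((2:ℝ) ^ (1-av) * x ^ (1-av)) := by
          rw [← h5]; gcongr
      _ ≤ Real.Gamma (x + av) * (2 * (x ^ (-av) * x)) := by
          rw [← h7]; gcongr
  nlinarith

noncomputable def bco (α : ℝ) (n : ℕ) : ℝ :=
  ∏ i ∈ Finset.range n, Real.Gamma (α * i + i + 2) / Real.Gamma (α * (i+1) + i + 2)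

noncomputable def cco (α : ℝ) (n : ℕ) : ℝ := (-1 : ℝ)^n * bco α n / (1 + α)^n

lemma arg_pos {α : ℝ} (hα : 0 < α) (y : ℝ) (hy : 0 ≤ y) : 0 < α * y + y + 2 := by
  nlinarith

lemma bco_pos {α : ℝ} (hα : 0 < α) (n : ℕ) : 0 < bco α n := by
  apply Finset.prod_pos
  intro i _
  apply div_pos
  · exact Real.Gamma_pos_of_pos (arg_pos hα i (Nat.cast_nonneg i))
  · apply Real.Gamma_pos_of_pos
    have h1 : 0 < α * ((i:ℝ)+1) + i + 2 := by nlinarith [Nat.cast_nonneg (α := ℝ) i]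
    exact h1

lemma bco_succ (α : ℝ) (n : ℕ) :
    bco α (n+1) = bco α n * (Real.Gamma ((1+α) * n + 2) / Real.Gamma ((1+α) * n + 2 + α)) := by
  rw [bco, Finset.prod_range_succ, ← bco]
  congr 2
  · push_cast; ring
  · push_cast; ring

lemma abs_cco {α : ℝ} (hα : 0 < α) (n : ℕ) : |cco α n| = bco α n / (1+α)^n := by
  rw [cco, abs_div, abs_mul, abs_pow, abs_neg, abs_one, one_pow, one_mul,
    abs_of_pos (bco_pos hα n), abs_pow, abs_of_pos (by linarith : (0:ℝ) < 1 + α)]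

lemma cco_entire {α : ℝ} (hα0 : 0 < α) (hα1 : α < 1) : Entire (cco α) := by
  intro R hR
  apply summable_of_ratio_norm_eventually_le (r := 1/2) (by norm_num)
  have htend : Tendsto (fun n : ℕ => ((1+α) * n + 2 : ℝ) ^ (-α)) atTop (nhds 0) := by
    apply (tendsto_rpow_neg_atTop hα0).comp
    apply Filter.tendsto_atTop_add_const_right
    apply Filter.Tendsto.const_mul_atTop (by linarith : (0:ℝ) < 1 + α)
    exact tendsto_natCast_atTop_atTop
  have hev : ∀ᶠ n : ℕ in atTop, ((1+α) * n + 2 : ℝ) ^ (-α) < (1+α) / (8 * R) := by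
    apply htend.eventually_lt_const
    positivity
  filter_upwards [hev] with n hn
  have hβ : (0:ℝ) < 1 + α := by linarith
  have hx1 : (1:ℝ) ≤ (1+α) * n + 2 := by nlinarith [Nat.cast_nonneg (α := ℝ) n]
  have hratio := gamma_ratio hx1 hα0 hα1
  have hGp : 0 < Real.Gamma ((1+α) * n + 2) := Real.Gamma_pos_of_pos (by linarith)
  have hGp' : 0 < Real.Gamma ((1+α) * n + 2 + α) := Real.Gamma_pos_of_pos (by linarith)
  have hxp : (0:ℝ) < ((1+α) * n + 2 : ℝ) ^ (-α) := Real.rpow_pos_of_pos (by linarith) _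
  rw [Real.norm_eq_abs, Real.norm_eq_abs, abs_of_nonneg (by positivity : (0:ℝ) ≤ |cco α n| * R ^ n),
    abs_of_nonneg (by positivity : (0:ℝ) ≤ |cco α (n+1)| * R ^ (n+1)),
    abs_cco hα0, abs_cco hα0, bco_succ]
  have hb := bco_pos hα0 n
  have hkey : Real.Gamma ((1+α)*n+2) * R ≤ (1/2) * (1+α) * Real.Gamma ((1+α)*n+2+α) := by
    calc Real.Gamma ((1+α)*n+2) * R
        ≤ (2 * ((1+α)*n+2:ℝ)^(-α) * Real.Gamma ((1+α)*n+2+α)) * R := by gcongr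
      _ ≤ (2 * ((1+α)/(8*R)) * Real.Gamma ((1+α)*n+2+α)) * R := by gcongr
      _ = (1/4) * (1+α) * Real.Gamma ((1+α)*n+2+α) := by field_simp; ring
      _ ≤ (1/2) * (1+α) * Real.Gamma ((1+α)*n+2+α) := by nlinarith
  have hb := bco_pos hα0 n
  have hGB := hGp'
  calc bco α n * (Real.Gamma ((1+α)*n+2) / Real.Gamma ((1+α)*n+2+α)) / (1+α)^(n+1) * R^(n+1)
      = (bco α n * R^n / (1+α)^n) * ((Real.Gamma ((1+α)*n+2) * R) / (Real.Gamma ((1+α)*n+2+α) * (1+α))) := by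
        rw [pow_succ, pow_succ]; field_simp
    _ ≤ (bco α n * R^n / (1+α)^n) * (((1/2) * (1+α) * Real.Gamma ((1+α)*n+2+α)) / (Real.Gamma ((1+α)*n+2+α) * (1+α))) := by
        gcongr
    _ = 1/2 * (bco α n / (1+α)^n * R^n) := by
        field_simp


lemma beta_integrable {α p ξ : ℝ} (hα0 : 0 < α) (hα1 : α < 1) (hp : 1 ≤ p) (hξ : 0 < ξ) :
    IntervalIntegrable (fun s => s ^ (p-1) * (ξ - s) ^ (-α)) volume 0 ξ := by
  have h1 : IntervalIntegrable (fun s : ℝ => (ξ - s) ^ (-α)) volume 0 ξ := by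
    have h0 : IntervalIntegrable (fun s : ℝ => s ^ (-α)) volume 0 ξ :=
      intervalIntegral.intervalIntegrable_rpow' (by linarith)
    have := (h0.comp_sub_left ξ).symm
    simpa using this
  apply h1.continuousOn_mul
  apply Continuous.continuousOn
  rw [continuous_iff_continuousAt]
  intro x
  exact Real.continuousAt_rpow_const x (p-1) (Or.inr (by linarith))

lemma beta_value {α p ξ : ℝ} (hα0 : 0 < α) (hα1 : α < 1) (hp : 1 ≤ p) (hξ : 0 < ξ) :
    ∫ s in (0:ℝ)..ξ, s ^ (p-1) * (ξ - s) ^ (-α)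
      = Real.Gamma p * Real.Gamma (1-α) / Real.Gamma (p + 1 - α) * ξ ^ (p - α) := by
  have hC := Complex.betaIntegral_scaled (p : ℂ) (((1 - α : ℝ)) : ℂ) hξ
  have hbeta : Complex.betaIntegral (p:ℂ) (((1-α:ℝ)):ℂ)
      = ((Real.Gamma p * Real.Gamma (1-α) / Real.Gamma (p + 1 - α) : ℝ) : ℂ) := by
    have hmul := Complex.Gamma_mul_Gamma_eq_betaIntegral
      (s := (p:ℂ)) (t := ((1-α:ℝ):ℂ)) (by simp; linarith) (by simp; linarith)
    have hsum : (p:ℂ) + ((1-α:ℝ):ℂ) = (((p + 1 - α : ℝ)):ℂ) := by push_cast; ring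
    rw [hsum] at hmul
    rw [Complex.Gamma_ofReal, Complex.Gamma_ofReal, Complex.Gamma_ofReal] at hmul
    have hne : ((Real.Gamma (p+1-α) : ℝ) : ℂ) ≠ 0 := by
      simp only [ne_eq, Complex.ofReal_eq_zero]
      exact ne_of_gt (Real.Gamma_pos_of_pos (by linarith))
    rw [Complex.ofReal_div, Complex.ofReal_mul, eq_div_iff hne, mul_comm]
    exact hmul.symm
  have hLHS : (∫ x in (0:ℝ)..ξ, (x:ℂ) ^ ((p:ℂ) - 1) * ((ξ:ℂ) - (x:ℂ)) ^ ((((1-α:ℝ)):ℂ) - 1))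
      = ((∫ s in (0:ℝ)..ξ, s ^ (p-1) * (ξ - s) ^ (-α) : ℝ) : ℂ) := by
    rw [← intervalIntegral.integral_ofReal]
    apply intervalIntegral.integral_congr
    intro x hx
    rw [uIcc_of_le (le_of_lt hξ)] at hx
    obtain ⟨hx0, hxξ⟩ := hx
    have e1 : ((x ^ (p-1) : ℝ) : ℂ) = (x:ℂ) ^ ((p:ℂ) - 1) := by
      rw [Complex.ofReal_cpow hx0]
      norm_num
    have e2 : (((ξ - x) ^ (-α) : ℝ) : ℂ) = ((ξ:ℂ) - (x:ℂ)) ^ ((((1-α:ℝ)):ℂ) - 1) := by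
      rw [Complex.ofReal_cpow (by linarith)]
      push_cast
      ring_nf
    simp only []
    rw [Complex.ofReal_mul, e1, e2]
  have hRHS : ((ξ:ℂ) ^ ((p:ℂ) + (((1-α:ℝ)):ℂ) - 1)) = ((ξ ^ (p - α) : ℝ) : ℂ) := by
    rw [Complex.ofReal_cpow (le_of_lt hξ)]
    norm_num
    congr 1
    push_cast
    ring
  rw [hLHS, hbeta, hRHS] at hC
  have h3 : ((∫ s in (0:ℝ)..ξ, s ^ (p-1) * (ξ - s) ^ (-α) : ℝ) : ℂ)
      = ((ξ ^ (p-α) * (Real.Gamma p * Real.Gamma (1-α) / Real.Gamma (p+1-α)) : ℝ) : ℂ) := by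
    rw [hC]; push_cast; ring
  have h4 := Complex.ofReal_injective h3
  rw [h4]; ring


end FSaux

namespace FSaux

lemma coeff_id {α : ℝ} (hα0 : 0 < α) (n : ℕ) :
    (1+α)^2 * dsh (cco α) n * Real.Gamma ((1+α) * ((n:ℝ)+1))
      = -(cco α n) * Real.Gamma ((1+α) * n + 2) := by
  have hβ : (0:ℝ) < 1 + α := by linarith
  have hne : (1+α) * ((n:ℝ)+1) ≠ 0 := by positivity
  have hG : Real.Gamma ((1+α) * ((n:ℝ)+1) + 1)
      = (1+α) * ((n:ℝ)+1) * Real.Gamma ((1+α) * ((n:ℝ)+1)) := Real.Gamma_add_one hne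
  have hΓpos : 0 < Real.Gamma ((1+α) * ((n:ℝ)+1)) :=
    Real.Gamma_pos_of_pos (by positivity)
  unfold dsh cco
  rw [bco_succ α n, show (1+α) * (n:ℝ) + 2 + α = (1+α) * ((n:ℝ)+1) + 1 by push_cast; ring, hG]
  have h1 : ((n:ℝ) + 1) ≠ 0 := by positivity
  field_simp
  ring

lemma PhiF_eq (α : ℝ) (y : ℝ) : PhiF α y = G (cco α) (y ^ (1+α)) := by
  unfold PhiF G
  apply tsum_congr
  intro n
  rw [cco, bco, div_pow]
  ring

lemma fund_eq {α x t : ℝ} (hα0 : 0 < α) (hx : 0 < x) (ht : 0 < t) :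
    fundSol α x t = a0 α * t ^ (-(1/(1+α))) * G (cco α) (x ^ (1+α) / t) := by
  rw [fundSol, if_pos ht, PhiF_eq]
  congr 2
  rw [abs_of_pos hx]
  rw [Real.mul_rpow (le_of_lt hx) (Real.rpow_nonneg (le_of_lt ht) _)]
  rw [← Real.rpow_mul (le_of_lt ht)]
  rw [show (-(1/(1+α))) * (1+α) = -1 by field_simp]
  rw [Real.rpow_neg_one, div_eq_mul_inv]


/-- spatial derivative of the solution -/
lemma u_hasDeriv {α s t : ℝ} (hα0 : 0 < α) (hα1 : α < 1) (hs : 0 < s) (ht : 0 < t) :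
    HasDerivAt (fun y => fundSol α y t)
      (a0 α * t ^ (-(1/(1+α))) * (G (dsh (cco α)) (s ^ (1+α) / t) * ((1+α) * s ^ α / t))) s := by
  have hinner : HasDerivAt (fun y : ℝ => y ^ (1+α) / t) ((1+α) * s ^ α / t) s := by
    have h1 : HasDerivAt (fun y : ℝ => y ^ (1+α)) ((1+α) * s ^ ((1+α) - 1)) s :=
      Real.hasDerivAt_rpow_const (Or.inl (ne_of_gt hs))
    have h2 := h1.div_const t
    rw [show (1+α) - 1 = α by ring] at h2
    exact h2
  have hchain := ((cco_entire hα0 hα1).hasDerivAt (s ^ (1+α) / t)).comp s hinner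
  have hfull := hchain.const_mul (a0 α * t ^ (-(1/(1+α))))
  apply hfull.congr_of_eventuallyEq
  filter_upwards [Ioi_mem_nhds hs] with y hy
  exact fund_eq hα0 hy ht

/-- time derivative of the solution -/
lemma time_hasDeriv {α x t : ℝ} (hα0 : 0 < α) (hα1 : α < 1) (hx : 0 < x) (ht : 0 < t) :
    HasDerivAt (fun τ => fundSol α x τ)
      (a0 α * ((-(1/(1+α))) * t ^ (-(1/(1+α)) - 1) * G (cco α) (x ^ (1+α) / t)
        + t ^ (-(1/(1+α))) * (G (dsh (cco α)) (x ^ (1+α) / t) * (x ^ (1+α) * (-(t^2)⁻¹))))) t := by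
  have h1 : HasDerivAt (fun τ : ℝ => τ ^ (-(1/(1+α)))) ((-(1/(1+α))) * t ^ (-(1/(1+α)) - 1)) t :=
    Real.hasDerivAt_rpow_const (Or.inl (ne_of_gt ht))
  have hinner : HasDerivAt (fun τ : ℝ => x ^ (1+α) / τ) (x ^ (1+α) * (-(t^2)⁻¹)) t := by
    simpa [div_eq_mul_inv] using (hasDerivAt_inv (ne_of_gt ht)).const_mul (x ^ (1+α))
  have h2 := ((cco_entire hα0 hα1).hasDerivAt (x ^ (1+α) / t)).comp t hinner
  have h3 := (h1.mul h2).const_mul (a0 α)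
  apply HasDerivAt.congr_of_eventuallyEq h3
  filter_upwards [Ioi_mem_nhds ht] with τ hτ
  rw [fund_eq hα0 hx hτ, mul_assoc]
  rfl


lemma caputo_eq {α ξ t : ℝ} (hα0 : 0 < α) (hα1 : α < 1) (hξ : 0 < ξ) (ht : 0 < t) :
    caputo α (fun y => fundSol α y t) ξ
      = -(a0 α) * t ^ (-(1/(1+α))) / ((1+α) * t) * (ξ * G (cco α) (ξ ^ (1+α) / t)) := by
  have hβ : (0:ℝ) < 1 + α := by linarith
  have htne : t ≠ 0 := ne_of_gt ht
  set W : ℕ → ℝ := fun n => a0 α * t ^ (-(1/(1+α))) * ((1+α)/t) * (dsh (cco α) n / t^n) with hW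
  set q : ℕ → ℝ := fun n => (1+α) * ((n:ℝ)+1) with hq
  have hq1 : ∀ n : ℕ, 1 ≤ q n := by
    intro n
    have : (0:ℝ) ≤ n := Nat.cast_nonneg n
    simp only [hq]
    nlinarith
  -- pointwise expansion of the integrand on Ioc 0 ξ
  have hptwise : ∀ s ∈ Ioc (0:ℝ) ξ,
      deriv (fun y => fundSol α y t) s * (ξ - s) ^ (-α)
        = ∑' n : ℕ, W n * (s ^ (q n - 1) * (ξ - s) ^ (-α)) := by
    intro s hs
    have hs0 : 0 < s := hs.1
    have hterm : ∀ n : ℕ, W n * (s ^ (q n - 1) * (ξ - s) ^ (-α))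
        = (dsh (cco α) n * (s ^ (1+α) / t) ^ n)
          * (a0 α * t ^ (-(1/(1+α))) * ((1+α) * s ^ α / t) * (ξ - s) ^ (-α)) := by
      intro n
      have hp1 : (s ^ (1+α) / t) ^ n = s ^ ((1+α) * (n:ℝ)) * (t ^ n)⁻¹ := by
        rw [div_pow, ← Real.rpow_natCast (s ^ (1+α)) n, ← Real.rpow_mul (le_of_lt hs0),
          div_eq_mul_inv]
      have hp2 : s ^ (q n - 1) = s ^ ((1+α) * (n:ℝ)) * s ^ α := by
        rw [← Real.rpow_add hs0]
        congr 1
        simp only [hq]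
        ring
      rw [hp1, hp2]
      simp only [hW, div_eq_mul_inv]
      ring
    calc deriv (fun y => fundSol α y t) s * (ξ - s) ^ (-α)
        = (∑' n : ℕ, dsh (cco α) n * (s ^ (1+α) / t) ^ n)
            * (a0 α * t ^ (-(1/(1+α))) * ((1+α) * s ^ α / t) * (ξ - s) ^ (-α)) := by
          rw [(u_hasDeriv hα0 hα1 hs0 ht).deriv]
          rw [show (∑' n : ℕ, dsh (cco α) n * (s ^ (1+α) / t) ^ n)
              = G (dsh (cco α)) (s ^ (1+α) / t) from rfl]
          ring
      _ = ∑' n : ℕ, (dsh (cco α) n * (s ^ (1+α) / t) ^ n)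
            * (a0 α * t ^ (-(1/(1+α))) * ((1+α) * s ^ α / t) * (ξ - s) ^ (-α)) :=
          (tsum_mul_right).symm
      _ = ∑' n : ℕ, W n * (s ^ (q n - 1) * (ξ - s) ^ (-α)) :=
          tsum_congr fun n => (hterm n).symm
  -- integrability of each term
  have hFint : ∀ n : ℕ, Integrable (fun s => W n * (s ^ (q n - 1) * (ξ - s) ^ (-α)))
      (volume.restrict (Ioc 0 ξ)) := by
    intro n
    have h1 := (intervalIntegrable_iff_integrableOn_Ioc_of_le (le_of_lt hξ)).1
      (beta_integrable hα0 hα1 (hq1 n) hξ)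
    exact h1.const_mul (W n)
  -- value of each term integral
  have hival : ∀ n : ℕ, (∫ s in Ioc (0:ℝ) ξ, W n * (s ^ (q n - 1) * (ξ - s) ^ (-α)))
      = W n * (Real.Gamma (q n) * Real.Gamma (1-α) / Real.Gamma (q n + 1 - α) * ξ ^ (q n - α)) := by
    intro n
    rw [MeasureTheory.integral_const_mul, ← intervalIntegral.integral_of_le (le_of_lt hξ),
      beta_value hα0 hα1 (hq1 n) hξ]
  -- norm integrals
  have hnormval : ∀ n : ℕ, (∫ s in Ioc (0:ℝ) ξ, ‖W n * (s ^ (q n - 1) * (ξ - s) ^ (-α))‖)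
      = |W n| * (Real.Gamma (q n) * Real.Gamma (1-α) / Real.Gamma (q n + 1 - α) * ξ ^ (q n - α)) := by
    intro n
    have h1 : (∫ s in Ioc (0:ℝ) ξ, ‖W n * (s ^ (q n - 1) * (ξ - s) ^ (-α))‖)
        = ∫ s in Ioc (0:ℝ) ξ, |W n| * (s ^ (q n - 1) * (ξ - s) ^ (-α)) := by
      apply setIntegral_congr_fun measurableSet_Ioc
      intro s hs
      dsimp only
      rw [Real.norm_eq_abs, abs_mul,
        abs_of_nonneg (mul_nonneg (Real.rpow_nonneg (le_of_lt hs.1) (q n - 1))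
          (Real.rpow_nonneg (sub_nonneg.2 hs.2) (-α)))]
    rw [h1, MeasureTheory.integral_const_mul, ← intervalIntegral.integral_of_le (le_of_lt hξ),
      beta_value hα0 hα1 (hq1 n) hξ]
  -- absolute value coefficient identity
  have hΓq : ∀ n : ℕ, 0 < Real.Gamma (q n) := by
    intro n
    apply Real.Gamma_pos_of_pos
    have : (0:ℝ) ≤ n := Nat.cast_nonneg n
    simp only [hq]
    nlinarith
  have hΓ2 : ∀ n : ℕ, 0 < Real.Gamma ((1+α) * (n:ℝ) + 2) := by
    intro n
    apply Real.Gamma_pos_of_pos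
    have : (0:ℝ) ≤ n := Nat.cast_nonneg n
    nlinarith
  have habs_id : ∀ n : ℕ, (1+α)^2 * |dsh (cco α) n| * Real.Gamma (q n)
      = |cco α n| * Real.Gamma ((1+α) * (n:ℝ) + 2) := by
    intro n
    have h := coeff_id (α := α) hα0 n
    calc (1+α)^2 * |dsh (cco α) n| * Real.Gamma (q n)
        = |(1+α)^2 * dsh (cco α) n * Real.Gamma ((1+α) * ((n:ℝ)+1))| := by
          rw [abs_mul, abs_mul, abs_of_nonneg (by positivity : (0:ℝ) ≤ (1+α)^2),
            abs_of_pos (hΓq n)]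
      _ = |(-(cco α n)) * Real.Gamma ((1+α) * (n:ℝ) + 2)| := by rw [h]
      _ = |cco α n| * Real.Gamma ((1+α) * (n:ℝ) + 2) := by
          rw [abs_mul, abs_neg, abs_of_pos (hΓ2 n)]
  have hratio : ∀ n : ℕ, |dsh (cco α) n| * Real.Gamma (q n) / Real.Gamma ((1+α) * (n:ℝ) + 2)
      = |cco α n| / (1+α)^2 := by
    intro n
    rw [div_eq_div_iff (ne_of_gt (hΓ2 n)) (by positivity)]
    nlinarith [habs_id n]
  have hratioS : ∀ n : ℕ, dsh (cco α) n * Real.Gamma (q n) / Real.Gamma ((1+α) * (n:ℝ) + 2)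
      = -(cco α n) / (1+α)^2 := by
    intro n
    rw [div_eq_div_iff (ne_of_gt (hΓ2 n)) (by positivity)]
    nlinarith [coeff_id (α := α) hα0 n]
  have hq2 : ∀ n : ℕ, q n + 1 - α = (1+α) * (n:ℝ) + 2 := by
    intro n; simp only [hq]; ring
  have hxp : ∀ n : ℕ, ξ ^ (q n - α) = (ξ ^ (1+α)) ^ n * ξ := by
    intro n
    rw [show q n - α = (1+α) * (n:ℝ) + 1 by simp only [hq]; ring, Real.rpow_add hξ,
      Real.rpow_one]
    congr 1
    rw [← Real.rpow_natCast (ξ ^ (1+α)) n, ← Real.rpow_mul (le_of_lt hξ)]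
  have hWabs : ∀ n : ℕ, |W n| = |a0 α * t ^ (-(1/(1+α))) * ((1+α)/t)| * (|dsh (cco α) n| / t^n) := by
    intro n
    simp only [hW]
    rw [abs_mul, abs_div, abs_of_pos (pow_pos ht n)]
  have hRpos : 0 < ξ ^ (1+α) / t := by positivity
  have hsummand_eq : ∀ n : ℕ,
      |W n| * (Real.Gamma (q n) * Real.Gamma (1-α) / Real.Gamma (q n + 1 - α) * ξ ^ (q n - α))
      = (|a0 α * t ^ (-(1/(1+α))) * ((1+α)/t)| * Real.Gamma (1-α) * ξ / (1+α)^2)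
          * (|cco α n| * (ξ ^ (1+α) / t) ^ n) := by
    intro n
    rw [hq2 n, hxp n, hWabs n]
    calc |a0 α * t ^ (-(1/(1+α))) * ((1+α)/t)| * (|dsh (cco α) n| / t^n)
          * (Real.Gamma (q n) * Real.Gamma (1-α) / Real.Gamma ((1+α) * (n:ℝ) + 2)
            * ((ξ ^ (1+α)) ^ n * ξ))
        = (|a0 α * t ^ (-(1/(1+α))) * ((1+α)/t)| * Real.Gamma (1-α) * ξ)
            * (|dsh (cco α) n| * Real.Gamma (q n) / Real.Gamma ((1+α) * (n:ℝ) + 2))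
            * ((ξ ^ (1+α)) ^ n / t^n) := by ring
      _ = (|a0 α * t ^ (-(1/(1+α))) * ((1+α)/t)| * Real.Gamma (1-α) * ξ)
            * (|cco α n| / (1+α)^2) * ((ξ ^ (1+α)) ^ n / t^n) := by rw [hratio n]
      _ = (|a0 α * t ^ (-(1/(1+α))) * ((1+α)/t)| * Real.Gamma (1-α) * ξ / (1+α)^2)
          * (|cco α n| * (ξ ^ (1+α) / t) ^ n) := by rw [div_pow]; ring
  have hsumnorm : Summable (fun n => ∫ s in Ioc (0:ℝ) ξ, ‖W n * (s ^ (q n - 1) * (ξ - s) ^ (-α))‖) := by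
    apply Summable.congr
      (((cco_entire hα0 hα1) _ hRpos).mul_left
        (|a0 α * t ^ (-(1/(1+α))) * ((1+α)/t)| * Real.Gamma (1-α) * ξ / (1+α)^2))
    intro n
    exact ((hnormval n).trans (hsummand_eq n)).symm
  have hinter := MeasureTheory.integral_tsum_of_summable_integral_norm hFint hsumnorm
  have hΓ1α : 0 < Real.Gamma (1-α) := Real.Gamma_pos_of_pos (by linarith)
  have hfinal_term : ∀ n : ℕ,
      (1/Real.Gamma (1-α)) * (W n * (Real.Gamma (q n) * Real.Gamma (1-α)
          / Real.Gamma (q n + 1 - α) * ξ ^ (q n - α)))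
      = (-(a0 α) * t ^ (-(1/(1+α))) / ((1+α) * t) * ξ) * (cco α n * (ξ ^ (1+α) / t) ^ n) := by
    intro n
    rw [hq2 n, hxp n]
    have hWn : W n = a0 α * t ^ (-(1/(1+α))) * ((1+α)/t) * (dsh (cco α) n / t^n) := by
      simp only [hW]
    rw [hWn]
    calc (1/Real.Gamma (1-α)) * (a0 α * t ^ (-(1/(1+α))) * ((1+α)/t) * (dsh (cco α) n / t^n)
          * (Real.Gamma (q n) * Real.Gamma (1-α) / Real.Gamma ((1+α) * (n:ℝ) + 2)
            * ((ξ ^ (1+α)) ^ n * ξ)))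
        = (Real.Gamma (1-α) / Real.Gamma (1-α))
            * (a0 α * t ^ (-(1/(1+α))) * ((1+α)/t) * ξ)
            * (dsh (cco α) n * Real.Gamma (q n) / Real.Gamma ((1+α) * (n:ℝ) + 2))
            * ((ξ ^ (1+α)) ^ n / t^n) := by ring
      _ = 1 * (a0 α * t ^ (-(1/(1+α))) * ((1+α)/t) * ξ)
            * (-(cco α n) / (1+α)^2) * ((ξ ^ (1+α)) ^ n / t^n) := by
          rw [hratioS n, div_self (ne_of_gt hΓ1α)]
      _ = (-(a0 α) * t ^ (-(1/(1+α))) / ((1+α) * t) * ξ) * (cco α n * (ξ ^ (1+α) / t) ^ n) := by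
          rw [div_pow]
          field_simp
  simp only [caputo]
  rw [intervalIntegral.integral_of_le (le_of_lt hξ)]
  rw [setIntegral_congr_fun measurableSet_Ioc hptwise]
  rw [← hinter]
  rw [tsum_congr hival]
  rw [← tsum_mul_left]
  rw [tsum_congr hfinal_term]
  rw [tsum_mul_left]
  rw [show (∑' n : ℕ, cco α n * (ξ ^ (1+α) / t) ^ n) = G (cco α) (ξ ^ (1+α) / t) from rfl]
  ring


lemma caputo_deriv {α x t : ℝ} (hα0 : 0 < α) (hα1 : α < 1) (hx : 0 < x) (ht : 0 < t) :
    deriv (fun ξ => caputo α (fun y => fundSol α y t) ξ) x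
      = -(a0 α) * t ^ (-(1/(1+α))) / ((1+α) * t)
          * (G (cco α) (x ^ (1+α) / t)
            + x * (G (dsh (cco α)) (x ^ (1+α) / t) * ((1+α) * x ^ α / t))) := by
  have hev : (fun ξ => caputo α (fun y => fundSol α y t) ξ)
      =ᶠ[nhds x] (fun ξ => -(a0 α) * t ^ (-(1/(1+α))) / ((1+α) * t)
        * (ξ * G (cco α) (ξ ^ (1+α) / t))) := by
    filter_upwards [Ioi_mem_nhds hx] with ξ hξ
    exact caputo_eq hα0 hα1 hξ ht
  rw [hev.deriv_eq]
  have hinner : HasDerivAt (fun y : ℝ => y ^ (1+α) / t) ((1+α) * x ^ α / t) x := by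
    have h1 : HasDerivAt (fun y : ℝ => y ^ (1+α)) ((1+α) * x ^ ((1+α) - 1)) x :=
      Real.hasDerivAt_rpow_const (Or.inl (ne_of_gt hx))
    have h2 := h1.div_const t
    rw [show (1+α) - 1 = α by ring] at h2
    exact h2
  have hchain := ((cco_entire hα0 hα1).hasDerivAt (x ^ (1+α) / t)).comp x hinner
  have hmul := (hasDerivAt_id x).mul hchain
  have hfull := hmul.const_mul (-(a0 α) * t ^ (-(1/(1+α))) / ((1+α) * t))
  have hfull' : HasDerivAt (fun ξ : ℝ => -(a0 α) * t ^ (-(1/(1+α))) / ((1+α) * t)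
      * (ξ * G (cco α) (ξ ^ (1+α) / t)))
      (-(a0 α) * t ^ (-(1/(1+α))) / ((1+α) * t)
        * (1 * G (cco α) (x ^ (1+α) / t)
          + x * (G (dsh (cco α)) (x ^ (1+α) / t) * ((1+α) * x ^ α / t)))) x := hfull
  rw [hfull'.deriv]
  ring

lemma pde_holds {α x t : ℝ} (hα0 : 0 < α) (hα1 : α < 1) (hx : 0 < x) (ht : 0 < t) :
    deriv (fun τ => fundSol α x τ) t
      - deriv (fun ξ => caputo α (fun y => fundSol α y t) ξ) x = 0 := by
  rw [(time_hasDeriv hα0 hα1 hx ht).deriv, caputo_deriv hα0 hα1 hx ht]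
  have hxx : x ^ (1+α) = x * x ^ α := by
    rw [Real.rpow_add hx, Real.rpow_one]
  have htt : t ^ (-(1/(1+α)) - 1) = t ^ (-(1/(1+α))) / t := by
    rw [Real.rpow_sub ht, Real.rpow_one]
  rw [hxx, htt]
  have hβ : (1:ℝ) + α ≠ 0 := by positivity
  field_simp
  ring

lemma selfsim {α lam x t : ℝ} (hα0 : 0 < α) (hlam : 0 < lam) (hx : 0 < x) (ht : 0 < t) :
    fundSol α x t
      = lam ^ ((1:ℝ)/(1+α)) * fundSol α (lam ^ ((1:ℝ)/(1+α)) * x) (lam * t) := by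
  have hβ : (0:ℝ) < 1 + α := by linarith
  have h1 : lam ^ ((1:ℝ)/(1+α)) * lam ^ (-(1/(1+α))) = 1 := by
    rw [← Real.rpow_add hlam]
    norm_num
  rw [fundSol, fundSol, if_pos ht, if_pos (mul_pos hlam ht)]
  have hmulrpow : (lam * t) ^ (-(1/(1+α))) = lam ^ (-(1/(1+α))) * t ^ (-(1/(1+α))) :=
    Real.mul_rpow (le_of_lt hlam) (le_of_lt ht)
  have harg : |lam ^ ((1:ℝ)/(1+α)) * x| * (lam*t) ^ (-(1/(1+α))) = |x| * t ^ (-(1/(1+α))) := by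
    rw [abs_of_pos (mul_pos (Real.rpow_pos_of_pos hlam _) hx), abs_of_pos hx, hmulrpow]
    calc lam ^ ((1:ℝ)/(1+α)) * x * (lam ^ (-(1/(1+α))) * t ^ (-(1/(1+α))))
        = (lam ^ ((1:ℝ)/(1+α)) * lam ^ (-(1/(1+α)))) * (x * t ^ (-(1/(1+α)))) := by ring
      _ = x * t ^ (-(1/(1+α))) := by rw [h1, one_mul]
  rw [harg, hmulrpow]
  calc a0 α * t ^ (-(1/(1+α))) * PhiF α (|x| * t ^ (-(1/(1+α))))
      = (lam ^ ((1:ℝ)/(1+α)) * lam ^ (-(1/(1+α))))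
        * (a0 α * t ^ (-(1/(1+α))) * PhiF α (|x| * t ^ (-(1/(1+α))))) := by rw [h1, one_mul]
    _ = lam ^ ((1:ℝ)/(1+α)) * (a0 α * (lam ^ (-(1/(1+α))) * t ^ (-(1/(1+α))))
        * PhiF α (|x| * t ^ (-(1/(1+α))))) := by ring

lemma contdiff_sol {α : ℝ} (hα0 : 0 < α) (hα1 : α < 1) :
    ContDiffOn ℝ 2 (fun p : ℝ × ℝ => fundSol α p.1 p.2) (Set.Ioi 0 ×ˢ Set.Ioi 0) := by
  apply ContDiffOn.congr
    (f := fun p : ℝ × ℝ => a0 α * p.2 ^ (-(1/(1+α))) * G (cco α) (p.1 ^ (1+α) / p.2))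
  · intro p hp
    have hp1 : (0:ℝ) < p.1 := hp.1
    have hp2 : (0:ℝ) < p.2 := hp.2
    apply ContDiffAt.contDiffWithinAt
    have h_t : ContDiffAt ℝ 2 (fun p : ℝ × ℝ => p.2 ^ (-(1/(1+α)))) p :=
      (Real.contDiffAt_rpow_const_of_ne (ne_of_gt hp2)).comp p contDiffAt_snd
    have h_x : ContDiffAt ℝ 2 (fun p : ℝ × ℝ => p.1 ^ (1+α)) p :=
      (Real.contDiffAt_rpow_const_of_ne (ne_of_gt hp1)).comp p contDiffAt_fst
    have h_div : ContDiffAt ℝ 2 (fun p : ℝ × ℝ => p.1 ^ (1+α) / p.2) p :=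
      h_x.div contDiffAt_snd (ne_of_gt hp2)
    have h_G : ContDiffAt ℝ 2 (fun p : ℝ × ℝ => G (cco α) (p.1 ^ (1+α) / p.2)) p :=
      ((cco_entire hα0 hα1).contDiffTwo.contDiffAt).comp p h_div
    exact (contDiffAt_const.mul h_t).mul h_G
  · intro p hp
    exact fund_eq hα0 hp.1 hp.2


end FSaux

/-- `ℰ` is `C²` on `(0,∞)²`, solves `ℰ_t − ∂_x D^α_x ℰ = 0` there,
and is self-similar: `ℰ(x,t) = λ^{1/(1+α)} ℰ(λ^{1/(1+α)} x, λ t)`. -/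
theorem fundSol_properties (α : ℝ) (hα : α ∈ Set.Ioo (0:ℝ) 1) :
    ContDiffOn ℝ 2 (fun p : ℝ × ℝ => fundSol α p.1 p.2) (Set.Ioi 0 ×ˢ Set.Ioi 0) ∧
    (∀ x > (0:ℝ), ∀ t > (0:ℝ),
        deriv (fun τ => fundSol α x τ) t
          - deriv (fun ξ => caputo α (fun y => fundSol α y t) ξ) x = 0) ∧
    (∀ lam > (0:ℝ), ∀ x > (0:ℝ), ∀ t > (0:ℝ),
        fundSol α x t
          = lam ^ ((1:ℝ)/(1+α)) * fundSol α (lam ^ ((1:ℝ)/(1+α)) * x) (lam * t)) := by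
  obtain ⟨hα0, hα1⟩ := hα
  refine ⟨FSaux.contdiff_sol hα0 hα1, ?_, ?_⟩
  · intro x hx t ht
    exact FSaux.pde_holds hα0 hα1 hx ht
  · intro lam hlam x hx t ht
    exact FSaux.selfsim hα0 hlam hx ht
end
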